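/- arXiv:1310.5156 — 8 statements merged into one kernel-verified Lean document; each statement's English description precedes it below -/
import Mathlib

section
/- For any two bounded linear operators A, Ã : X → Y between real Hilbert spaces and every real number α > 0, the regularized pseudoinverses satisfy the perturbation bound ‖R_α(A) − R_α(Ã)‖ ≤ (9/(4α)) ‖A − Ã‖. -/
open ContinuousLinearMap

-- generic bound lemmas
lemma L1 {X Y : Type*} [NormedAddCommGroup X] [InnerProductSpace ℝ X] [CompleteSpace X]
    [NormedAddCommGroup Y] [InnerProductSpace ℝ Y] [CompleteSpace Y]
    (A : X →L[ℝ] Y) {α : ℝ} (hα : 0 < α) (B : X →L[ℝ] X)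
    (hB₂ : (α • (1 : X →L[ℝ] X) + adjoint A ∘L A) ∘L B = 1) : ‖B‖ ≤ 1 / α := by
  apply ContinuousLinearMap.opNorm_le_bound _ (by positivity)
  intro x
  have hx : α • B x + adjoint A (A (B x)) = x := by
    have := congrArg (fun T => T x) hB₂
    simpa using this
  have h1 : (inner ℝ x (B x) : ℝ) = α * ‖B x‖^2 + ‖A (B x)‖^2 := by
    nth_rewrite 1 [← hx]
    rw [inner_add_left, real_inner_smul_left, real_inner_self_eq_norm_sq,
      ContinuousLinearMap.adjoint_inner_left, real_inner_self_eq_norm_sq]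
  have h2 : (inner ℝ x (B x) : ℝ) ≤ ‖x‖ * ‖B x‖ := real_inner_le_norm x (B x)
  have h3 : α * ‖B x‖^2 ≤ ‖x‖ * ‖B x‖ := by nlinarith [sq_nonneg ‖A (B x)‖]
  rcases eq_or_lt_of_le (norm_nonneg (B x)) with h | h
  · rw [← h]; positivity
  · rw [div_mul_eq_mul_div, le_div_iff₀ hα]
    nlinarith

lemma L2 {X Y : Type*} [NormedAddCommGroup X] [InnerProductSpace ℝ X] [CompleteSpace X]
    [NormedAddCommGroup Y] [InnerProductSpace ℝ Y] [CompleteSpace Y]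
    (A : X →L[ℝ] Y) {α : ℝ} (hα : 0 < α) (B : X →L[ℝ] X)
    (hB₂ : (α • (1 : X →L[ℝ] X) + adjoint A ∘L A) ∘L B = 1) :
    ‖B ∘L adjoint A‖ ≤ 1 / (2 * Real.sqrt α) := by
  have hs : 0 < Real.sqrt α := Real.sqrt_pos.mpr hα
  have hs2 : Real.sqrt α ^ 2 = α := Real.sq_sqrt hα.le
  apply ContinuousLinearMap.opNorm_le_bound _ (by positivity)
  intro y
  set x := B (adjoint A y) with hxdef
  have hx : α • x + adjoint A (A x) = adjoint A y := by
    have := congrArg (fun T => T (adjoint A y)) hB₂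
    simpa using this
  have h1 : (inner ℝ (adjoint A y) x : ℝ) = α * ‖x‖^2 + ‖A x‖^2 := by
    rw [← hx, inner_add_left, real_inner_smul_left, real_inner_self_eq_norm_sq,
      ContinuousLinearMap.adjoint_inner_left, real_inner_self_eq_norm_sq]
  have h2 : (inner ℝ (adjoint A y) x : ℝ) = (inner ℝ y (A x) : ℝ) := by
    rw [ContinuousLinearMap.adjoint_inner_left]
  have h3 : (inner ℝ y (A x) : ℝ) ≤ ‖y‖ * ‖A x‖ := real_inner_le_norm y (A x)
  have key : α * ‖x‖^2 ≤ ‖y‖^2 / 4 := by nlinarith [sq_nonneg (‖A x‖ - ‖y‖ / 2)]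
  have : (Real.sqrt α * ‖x‖)^2 ≤ (‖y‖/2)^2 := by
    rw [mul_pow, hs2]; nlinarith
  have h4 : Real.sqrt α * ‖x‖ ≤ ‖y‖ / 2 :=
    (pow_le_pow_iff_left₀ (by positivity) (by positivity) two_ne_zero).mp this
  rw [div_mul_eq_mul_div, le_div_iff₀ (by positivity)]
  simp only [ContinuousLinearMap.comp_apply, ← hxdef]
  nlinarith

set_option maxHeartbeats 1000000 in
/-- For bounded linear operators `A, Ã : X → Y` between real Hilbert spaces and `α > 0`,
the regularized pseudoinverses satisfy `‖R_α(A) − R_α(Ã)‖ ≤ (9/(4α)) ‖A − Ã‖`. -/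
theorem stmt_3 {X Y : Type*}
    [NormedAddCommGroup X] [InnerProductSpace ℝ X] [CompleteSpace X]
    [NormedAddCommGroup Y] [InnerProductSpace ℝ Y] [CompleteSpace Y]
    (A At : X →L[ℝ] Y) (α : ℝ) (hα : 0 < α)
    (B Bt : X →L[ℝ] X)
    (hB₁ : B ∘L (α • (1 : X →L[ℝ] X) + ContinuousLinearMap.adjoint A ∘L A) = 1)
    (hB₂ : (α • (1 : X →L[ℝ] X) + ContinuousLinearMap.adjoint A ∘L A) ∘L B = 1)
    (hBt₁ : Bt ∘L (α • (1 : X →L[ℝ] X) + ContinuousLinearMap.adjoint At ∘L At) = 1)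
    (hBt₂ : (α • (1 : X →L[ℝ] X) + ContinuousLinearMap.adjoint At ∘L At) ∘L Bt = 1) :
    ‖B ∘L ContinuousLinearMap.adjoint A - Bt ∘L ContinuousLinearMap.adjoint At‖ ≤
      9 / (4 * α) * ‖A - At‖ := by
  set A' := adjoint A with hA'
  set At' := adjoint At with hAt'
  set Ct : Y →L[ℝ] Y := α⁻¹ • (1 - At ∘L (Bt ∘L At')) with hCtdef
  have hB1p : ∀ x : X, B (α • x + A' (A x)) = x := fun x => by
    have := congrArg (fun T => T x) hB₁; simpa using this
  have hBt2p : ∀ x : X, α • Bt x + At' (At (Bt x)) = x := fun x => by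
    have := congrArg (fun T => T x) hBt₂; simpa using this
  have hCtp : ∀ y : Y, Ct y = α⁻¹ • (y - At (Bt (At' y))) := fun y => by
    simp [hCtdef]
  have e2 : ∀ y : Y, α • Ct y + At (At' (Ct y)) = y := by
    intro y
    have h5 := congrArg At (hBt2p (At' y))
    simp only [map_add, map_smul] at h5
    have h6 : At (At' (At (Bt (At' y)))) = At (At' y) - α • At (Bt (At' y)) :=
      eq_sub_of_add_eq' h5
    rw [hCtp y]
    simp only [map_sub, map_smul, h6]
    match_scalars <;> field_simp <;> ring
  have e3 : ∀ y : Y, Bt (At' y) = At' (Ct y) := by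
    intro y
    have h6 : At' (At (Bt (At' y))) = At' y - α • Bt (At' y) :=
      eq_sub_of_add_eq' (hBt2p (At' y))
    rw [hCtp y]
    simp only [map_sub, map_smul, h6]
    match_scalars <;> field_simp <;> ring
  -- the key operator identity
  have key : B ∘L A' - Bt ∘L At'
      = α • (B ∘L ((A' - At') ∘L Ct)) + (B ∘L A') ∘L ((At - A) ∘L (Bt ∘L At')) := by
    ext y
    simp only [ContinuousLinearMap.comp_apply, ContinuousLinearMap.sub_apply,
      ContinuousLinearMap.add_apply, ContinuousLinearMap.smul_apply]
    have hb := hB1p (Bt (At' y))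
    conv_lhs => rw [← hb]
    rw [← map_sub B, ← map_smul B, ← map_add B]
    congr 1
    rw [e3 y]
    have h7 := congrArg A' (e2 y)
    simp only [map_add, map_smul] at h7
    rw [← h7]
    simp only [map_sub]
    module
  -- norm bounds
  have hs : 0 < Real.sqrt α := Real.sqrt_pos.mpr hα
  have hs2 : Real.sqrt α ^ 2 = α := Real.sq_sqrt hα.le
  have hBn : ‖B‖ ≤ 1 / α := L1 A hα B hB₂
  have e2op : (α • (1 : Y →L[ℝ] Y) + adjoint At' ∘L At') ∘L Ct = 1 := by
    rw [hAt', adjoint_adjoint]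
    ext y
    simpa using e2 y
  have hCtn : ‖Ct‖ ≤ 1 / α := L1 At' hα Ct e2op
  have hBA : ‖B ∘L A'‖ ≤ 1 / (2 * Real.sqrt α) := L2 A hα B hB₂
  have hBtAt : ‖Bt ∘L At'‖ ≤ 1 / (2 * Real.sqrt α) := L2 At hα Bt hBt₂
  have hsub : ‖A' - At'‖ = ‖A - At‖ := by
    rw [hA', hAt', ← map_sub (ContinuousLinearMap.adjoint (𝕜 := ℝ))]
    exact LinearIsometryEquiv.norm_map _ _
  have hsub' : ‖At - A‖ = ‖A - At‖ := norm_sub_rev _ _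
  have n1 : ‖B ∘L ((A' - At') ∘L Ct)‖ ≤ (1/α) * (‖A - At‖ * (1/α)) := by
    calc ‖B ∘L ((A' - At') ∘L Ct)‖ ≤ ‖B‖ * ‖(A' - At') ∘L Ct‖ :=
          ContinuousLinearMap.opNorm_comp_le _ _
      _ ≤ ‖B‖ * (‖A' - At'‖ * ‖Ct‖) :=
          mul_le_mul_of_nonneg_left (ContinuousLinearMap.opNorm_comp_le _ _) (norm_nonneg _)
      _ ≤ (1/α) * (‖A - At‖ * (1/α)) := by
          rw [hsub]
          exact mul_le_mul hBn (mul_le_mul_of_nonneg_left hCtn (norm_nonneg _))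
            (by positivity) (by positivity)
  have n2 : ‖(B ∘L A') ∘L ((At - A) ∘L (Bt ∘L At'))‖
      ≤ (1/(2*Real.sqrt α)) * (‖A - At‖ * (1/(2*Real.sqrt α))) := by
    calc ‖(B ∘L A') ∘L ((At - A) ∘L (Bt ∘L At'))‖
        ≤ ‖B ∘L A'‖ * ‖(At - A) ∘L (Bt ∘L At')‖ :=
          ContinuousLinearMap.opNorm_comp_le _ _
      _ ≤ ‖B ∘L A'‖ * (‖At - A‖ * ‖Bt ∘L At'‖) :=
          mul_le_mul_of_nonneg_left (ContinuousLinearMap.opNorm_comp_le _ _) (norm_nonneg _)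
      _ ≤ (1/(2*Real.sqrt α)) * (‖A - At‖ * (1/(2*Real.sqrt α))) := by
          rw [hsub']
          exact mul_le_mul hBA (mul_le_mul_of_nonneg_left hBtAt (norm_nonneg _))
            (by positivity) (by positivity)
  rw [key]
  refine le_trans (norm_add_le _ _) ?_
  have hAAt : (0:ℝ) ≤ ‖A - At‖ := norm_nonneg _
  have n1' : ‖α • (B ∘L ((A' - At') ∘L Ct))‖ ≤ α * ((1/α) * (‖A - At‖ * (1/α))) := by
    refine le_trans (ContinuousLinearMap.opNorm_smul_le _ _) ?_
    rw [Real.norm_of_nonneg hα.le]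
    exact mul_le_mul_of_nonneg_left n1 hα.le
  have hq1 : α * ((1/α) * (‖A - At‖ * (1/α))) = (1/α) * ‖A - At‖ := by
    field_simp
  have hq2 : (1/(2*Real.sqrt α)) * (‖A - At‖ * (1/(2*Real.sqrt α)))
      = (1/(4*α)) * ‖A - At‖ := by
    have hss : Real.sqrt α * Real.sqrt α = α := Real.mul_self_sqrt hα.le
    field_simp
    rw [hs2]
    ring
  have hfin : (1/α) * ‖A - At‖ + (1/(4*α)) * ‖A - At‖ ≤ 9 / (4 * α) * ‖A - At‖ := by
    have hdiff : 9 / (4 * α) * ‖A - At‖ - ((1/α) * ‖A - At‖ + (1/(4*α)) * ‖A - At‖)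
        = (1/α) * ‖A - At‖ := by field_simp; ring
    nlinarith [mul_nonneg (by positivity : (0:ℝ) ≤ 1/α) hAAt]
  calc ‖α • (B ∘L ((A' - At') ∘L Ct))‖ + ‖(B ∘L A') ∘L ((At - A) ∘L (Bt ∘L At'))‖
      ≤ α * ((1/α) * (‖A - At‖ * (1/α)))
        + (1/(2*Real.sqrt α)) * (‖A - At‖ * (1/(2*Real.sqrt α))) := add_le_add n1' n2
    _ = (1/α) * ‖A - At‖ + (1/(4*α)) * ‖A - At‖ := by rw [hq1, hq2]
    _ ≤ 9 / (4 * α) * ‖A - At‖ := hfin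
end

section
/- Let A : X → Y be a bounded linear operator between real Hilbert spaces, let σ ≥ 0 be such that ‖Ax‖ ≥ σ‖x‖ for every x ∈ X, and let α > 0. Then for every e ∈ X one has ‖e − R_α(A)Ae‖ ≤ (α/(α + σ²)) ‖e‖. -/
/-- If `A : X → Y` is a bounded linear operator between real Hilbert spaces with
`‖Ax‖ ≥ σ‖x‖` for all `x`, `σ ≥ 0` and `α > 0`, then for every `e ∈ X`,
`‖e − R_α(A) A e‖ ≤ (α/(α + σ²)) ‖e‖`. -/
theorem stmt_4 {X Y : Type*}
    [NormedAddCommGroup X] [InnerProductSpace ℝ X] [CompleteSpace X]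
    [NormedAddCommGroup Y] [InnerProductSpace ℝ Y] [CompleteSpace Y]
    (A : X →L[ℝ] Y) (σ : ℝ) (hσ : 0 ≤ σ) (hlow : ∀ x : X, σ * ‖x‖ ≤ ‖A x‖)
    (α : ℝ) (hα : 0 < α)
    (B : X →L[ℝ] X)
    (hB₁ : B ∘L (α • (1 : X →L[ℝ] X) + ContinuousLinearMap.adjoint A ∘L A) = 1)
    (hB₂ : (α • (1 : X →L[ℝ] X) + ContinuousLinearMap.adjoint A ∘L A) ∘L B = 1) :
    ∀ e : X, ‖e - ((B ∘L ContinuousLinearMap.adjoint A) ∘L A) e‖ ≤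
      α / (α + σ ^ 2) * ‖e‖ := by
  intro e
  have hpos : 0 < α + σ ^ 2 := by positivity
  set x := B e with hx
  -- e - B A* A e = α • x
  have h1 : e - ((B ∘L ContinuousLinearMap.adjoint A) ∘L A) e = α • x := by
    have := congrArg (fun T : X →L[ℝ] X => T e) hB₁
    simp only [ContinuousLinearMap.comp_apply, ContinuousLinearMap.add_apply,
      ContinuousLinearMap.smul_apply, ContinuousLinearMap.one_apply, map_add, map_smul] at this
    rw [sub_eq_iff_eq_add]
    exact this.symm
  -- (α I + A*A) x = e
  have h2 : α • x + ContinuousLinearMap.adjoint A (A x) = e := by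
    have := congrArg (fun T : X →L[ℝ] X => T e) hB₂
    simpa [ContinuousLinearMap.comp_apply, ContinuousLinearMap.add_apply,
      ContinuousLinearMap.smul_apply, ContinuousLinearMap.one_apply] using this
  have hinner : (α + σ ^ 2) * ‖x‖ ^ 2 ≤ inner ℝ x e := by
    have : (inner ℝ x e : ℝ) = α * ‖x‖ ^ 2 + ‖A x‖ ^ 2 := by
      rw [← h2, inner_add_right, real_inner_smul_right, real_inner_self_eq_norm_sq,
        ContinuousLinearMap.adjoint_inner_right, real_inner_self_eq_norm_sq]
    rw [this]
    have h3 : σ * ‖x‖ ≤ ‖A x‖ := hlow x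
    have h4 : (σ * ‖x‖) ^ 2 ≤ ‖A x‖ ^ 2 := by
      apply sq_le_sq' _ h3
      nlinarith [norm_nonneg x, norm_nonneg (A x)]
    nlinarith
  have hx_le : ‖x‖ ≤ ‖e‖ / (α + σ ^ 2) := by
    have hCS : (inner ℝ x e : ℝ) ≤ ‖x‖ * ‖e‖ := real_inner_le_norm x e
    rcases eq_or_lt_of_le (norm_nonneg x) with h | h
    · rw [← h]; positivity
    · rw [le_div_iff₀ hpos]
      have : (α + σ ^ 2) * ‖x‖ ^ 2 ≤ ‖x‖ * ‖e‖ := hinner.trans hCS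
      nlinarith
  rw [h1, norm_smul, Real.norm_of_nonneg hα.le]
  calc α * ‖x‖ ≤ α * (‖e‖ / (α + σ ^ 2)) := mul_le_mul_of_nonneg_left hx_le hα.le
    _ = α / (α + σ ^ 2) * ‖e‖ := by ring
end

section
/- Let F : X → Y be a twice continuously Fréchet differentiable map between real Hilbert spaces whose second derivative satisfies ‖F''(x)‖ ≤ d₃ for all x ∈ X, let r̃ ∈ X satisfy F(r̃) = 0, set A := F'(r̃), and let α > 0. Then for every r ∈ X, ‖R_α(A)(A(r̃ − r) + F(r))‖ ≤ (d₃/(4√α)) ‖r̃ − r‖². -/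
open ContinuousLinearMap in
/-- Spectral bound: `‖B (A* y)‖ ≤ ‖y‖ / (2√α)` when `(αI + A*A) ∘ B = 1`. -/
lemma reg_bound {X Y : Type*}
    [NormedAddCommGroup X] [InnerProductSpace ℝ X] [CompleteSpace X]
    [NormedAddCommGroup Y] [InnerProductSpace ℝ Y] [CompleteSpace Y]
    (A : X →L[ℝ] Y) (α : ℝ) (hα : 0 < α) (B : X →L[ℝ] X)
    (hB₂ : (α • (1 : X →L[ℝ] X) + adjoint A ∘L A) ∘L B = 1)
    (y : Y) : ‖B (adjoint A y)‖ ≤ ‖y‖ / (2 * Real.sqrt α) := by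
  set x := B (adjoint A y) with hx
  have hEq : α • x + adjoint A (A x) = adjoint A y := by
    have := congrArg (fun T : X →L[ℝ] X => T (adjoint A y)) hB₂
    simpa [ContinuousLinearMap.add_apply, ContinuousLinearMap.comp_apply] using this
  have key : α * ‖x‖ ^ 2 + ‖A x‖ ^ 2 ≤ ‖y‖ * ‖A x‖ := by
    have h1 : (inner ℝ (α • x + adjoint A (A x)) x : ℝ) = inner ℝ (adjoint A y) x := by rw [hEq]
    have h2 : (inner ℝ (α • x + adjoint A (A x)) x : ℝ)
        = α * ‖x‖ ^ 2 + ‖A x‖ ^ 2 := by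
      rw [inner_add_left, real_inner_smul_left, A.adjoint_inner_left,
        real_inner_self_eq_norm_sq, real_inner_self_eq_norm_sq]
    have h3 : (inner ℝ (adjoint A y) x : ℝ) ≤ ‖y‖ * ‖A x‖ := by
      rw [A.adjoint_inner_left]
      exact (real_inner_le_norm _ _)
    have := h2.symm.trans h1
    linarith [this ▸ h3, h3]
  have hs : (0:ℝ) < Real.sqrt α := Real.sqrt_pos.2 hα
  have hs2 : Real.sqrt α ^ 2 = α := Real.sq_sqrt hα.le
  rw [le_div_iff₀ (by positivity)]
  nlinarith [norm_nonneg x, norm_nonneg (A x), norm_nonneg y,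
    sq_nonneg (‖y‖ - 2 * ‖A x‖), sq_nonneg (Real.sqrt α * ‖x‖),
    sq_nonneg (2 * Real.sqrt α * ‖x‖ - ‖y‖)]

/-- Taylor bound with Lipschitz derivative. -/
lemma taylor_bound {X Y : Type*}
    [NormedAddCommGroup X] [InnerProductSpace ℝ X]
    [NormedAddCommGroup Y] [InnerProductSpace ℝ Y]
    (F : X → Y) (hF : ContDiff ℝ 2 F)
    (d₃ : ℝ) (hd₃ : 0 < d₃)
    (hF'' : ∀ x : X, ‖fderiv ℝ (fderiv ℝ F) x‖ ≤ d₃)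
    (rt r : X) :
    ‖F r - F rt - fderiv ℝ F rt (r - rt)‖ ≤ d₃ / 2 * ‖r - rt‖ ^ 2 := by
  have hdiff : Differentiable ℝ F := hF.differentiable (by norm_num)
  have hdiff' : Differentiable ℝ (fderiv ℝ F) :=
    (hF.fderiv_right (m := 1) (by norm_num)).differentiable (by norm_num)
  have hlip : ∀ a b : X, ‖fderiv ℝ F a - fderiv ℝ F b‖ ≤ d₃ * ‖a - b‖ := by
    intro a b
    have := lipschitzWith_of_nnnorm_fderiv_le (𝕜 := ℝ) (f := fderiv ℝ F)
      (C := d₃.toNNReal) (fun x => hdiff' x)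
      (fun x => by simpa [← NNReal.coe_le_coe, Real.coe_toNNReal _ hd₃.le] using hF'' x)
    have := this.dist_le_mul a b
    simpa [dist_eq_norm, Real.coe_toNNReal _ hd₃.le] using this
  set v := r - rt with hv
  set f : ℝ → Y := fun t => F (rt + t • v) - F rt - t • (fderiv ℝ F rt v) with hf
  have hg : ∀ t : ℝ, HasDerivAt (fun t : ℝ => rt + t • v) v t := fun t => by
    simpa using ((hasDerivAt_id t).smul_const v).const_add rt
  have hfd : ∀ t : ℝ, HasDerivAt f (fderiv ℝ F (rt + t • v) v - fderiv ℝ F rt v) t := by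
    intro t
    have h1 : HasDerivAt (fun t : ℝ => F (rt + t • v))
        (fderiv ℝ F (rt + t • v) v) t :=
      (hdiff (rt + t • v)).hasFDerivAt.comp_hasDerivAt t (hg t)
    simpa [hf, Pi.sub_def] using (h1.sub_const (F rt)).sub
      ((hasDerivAt_id t).smul_const (fderiv ℝ F rt v))
  have hbound : ∀ t ∈ Set.Ico (0:ℝ) 1,
      ‖fderiv ℝ F (rt + t • v) v - fderiv ℝ F rt v‖ ≤ d₃ * ‖v‖ ^ 2 * t := by
    intro t ht
    calc ‖fderiv ℝ F (rt + t • v) v - fderiv ℝ F rt v‖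
        ≤ ‖fderiv ℝ F (rt + t • v) - fderiv ℝ F rt‖ * ‖v‖ :=
          (fderiv ℝ F (rt + t • v) - fderiv ℝ F rt).le_opNorm v
      _ ≤ (d₃ * ‖rt + t • v - rt‖) * ‖v‖ := by
          gcongr
          exact hlip _ _
      _ = d₃ * ‖v‖ ^ 2 * t := by
          have : rt + t • v - rt = t • v := by abel
          rw [this, norm_smul, Real.norm_eq_abs, abs_of_nonneg ht.1]
          ring
  have hB : ∀ t : ℝ, HasDerivAt (fun t : ℝ => d₃ * ‖v‖ ^ 2 * t ^ 2 / 2)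
      (d₃ * ‖v‖ ^ 2 * t) t := by
    intro t
    have := ((hasDerivAt_pow 2 t).const_mul (d₃ * ‖v‖ ^ 2)).div_const 2
    convert this using 1
    norm_num
    rfl
    rfl
    ring
  have key := image_norm_le_of_norm_deriv_right_le_deriv_boundary
    (f := f) (a := 0) (b := 1)
    (fun t _ => (hfd t).continuousAt.continuousWithinAt)
    (fun t _ => (hfd t).hasDerivWithinAt)
    (by simp [hf]) hB hbound (Set.right_mem_Icc.2 zero_le_one)
  have hr : rt + v = r := by simp [hv]
  calc ‖F r - F rt - fderiv ℝ F rt v‖ = ‖f 1‖ := by simp [hf, hr]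
    _ ≤ d₃ * ‖v‖ ^ 2 * 1 ^ 2 / 2 := key
    _ = d₃ / 2 * ‖v‖ ^ 2 := by ring
/-- If `F : X → Y` is twice continuously Fréchet differentiable with `‖F''‖ ≤ d₃`
everywhere, `F(r̃) = 0`, `A := F'(r̃)` and `α > 0`, then for every `r`,
`‖R_α(A)(A(r̃ − r) + F(r))‖ ≤ (d₃/(4√α)) ‖r̃ − r‖²`. -/
theorem stmt_5 {X Y : Type*}
    [NormedAddCommGroup X] [InnerProductSpace ℝ X] [CompleteSpace X]
    [NormedAddCommGroup Y] [InnerProductSpace ℝ Y] [CompleteSpace Y]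
    (F : X → Y) (hF : ContDiff ℝ 2 F)
    (d₃ : ℝ) (hd₃ : 0 < d₃)
    (hF'' : ∀ x : X, ‖fderiv ℝ (fderiv ℝ F) x‖ ≤ d₃)
    (rt : X) (hrt : F rt = 0)
    (α : ℝ) (hα : 0 < α)
    (B : X →L[ℝ] X)
    (hB₁ : B ∘L (α • (1 : X →L[ℝ] X) +
      ContinuousLinearMap.adjoint (fderiv ℝ F rt) ∘L fderiv ℝ F rt) = 1)
    (hB₂ : (α • (1 : X →L[ℝ] X) +
      ContinuousLinearMap.adjoint (fderiv ℝ F rt) ∘L fderiv ℝ F rt) ∘L B = 1) :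
    ∀ r : X, ‖(B ∘L ContinuousLinearMap.adjoint (fderiv ℝ F rt))
        (fderiv ℝ F rt (rt - r) + F r)‖ ≤
      d₃ / (4 * Real.sqrt α) * ‖rt - r‖ ^ 2 := by
  intro r
  set A := fderiv ℝ F rt with hA
  have hw : A (rt - r) + F r = F r - F rt - A (r - rt) := by
    rw [hrt, map_sub, map_sub]; abel
  have htay : ‖F r - F rt - A (r - rt)‖ ≤ d₃ / 2 * ‖r - rt‖ ^ 2 :=
    taylor_bound F hF d₃ hd₃ hF'' rt r
  have hs : (0:ℝ) < Real.sqrt α := Real.sqrt_pos.2 hα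
  calc ‖(B ∘L ContinuousLinearMap.adjoint A) (A (rt - r) + F r)‖
      = ‖B (ContinuousLinearMap.adjoint A (A (rt - r) + F r))‖ := rfl
    _ ≤ ‖A (rt - r) + F r‖ / (2 * Real.sqrt α) :=
        reg_bound A α hα B hB₂ _
    _ ≤ (d₃ / 2 * ‖r - rt‖ ^ 2) / (2 * Real.sqrt α) := by
        gcongr
        rw [hw]; exact htay
    _ = d₃ / (4 * Real.sqrt α) * ‖rt - r‖ ^ 2 := by
        rw [norm_sub_rev]
        rw [div_mul_eq_mul_div, div_div]
        ring
end

section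
/- Let X and Y be real Hilbert spaces, A : X → Y a bounded linear operator, α > 0, and let G : ℝ → Y be differentiable on the interval [k, k'] (with k ≤ k') with ‖G'(s)‖ ≤ d₂ for all s ∈ [k, k']. Then ‖R_α(A)(G(k') − G(k))‖ ≤ (d₂/(2√α)) (k' − k). -/
/-- If `A : X → Y` is a bounded linear operator between real Hilbert spaces, `α > 0`,
and `G : ℝ → Y` is differentiable on `[k, k']` with `‖G'(s)‖ ≤ d₂` there, then
`‖R_α(A)(G(k') − G(k))‖ ≤ (d₂/(2√α)) (k' − k)`. -/
theorem stmt_6 {X Y : Type*}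
    [NormedAddCommGroup X] [InnerProductSpace ℝ X] [CompleteSpace X]
    [NormedAddCommGroup Y] [InnerProductSpace ℝ Y] [CompleteSpace Y]
    (A : X →L[ℝ] Y) (α : ℝ) (hα : 0 < α)
    (B : X →L[ℝ] X)
    (hB₁ : B ∘L (α • (1 : X →L[ℝ] X) + ContinuousLinearMap.adjoint A ∘L A) = 1)
    (hB₂ : (α • (1 : X →L[ℝ] X) + ContinuousLinearMap.adjoint A ∘L A) ∘L B = 1)
    (k k' : ℝ) (hkk' : k ≤ k')
    (G : ℝ → Y) (G' : ℝ → Y) (d₂ : ℝ) (hd₂ : 0 < d₂)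
    (hG : ∀ s ∈ Set.Icc k k', HasDerivWithinAt G (G' s) (Set.Icc k k') s)
    (hG' : ∀ s ∈ Set.Icc k k', ‖G' s‖ ≤ d₂) :
    ‖(B ∘L ContinuousLinearMap.adjoint A) (G k' - G k)‖ ≤
      d₂ / (2 * Real.sqrt α) * (k' - k) := by
  have hs : 0 < Real.sqrt α := Real.sqrt_pos.mpr hα
  have hss : Real.sqrt α * Real.sqrt α = α := Real.mul_self_sqrt hα.le
  set y := G k' - G k with hy
  set x := B ((ContinuousLinearMap.adjoint A) y) with hx
  -- mean value bound on y
  have hy_bound : ‖y‖ ≤ d₂ * (k' - k) := by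
    have := Convex.norm_image_sub_le_of_norm_hasDerivWithin_le hG hG' (convex_Icc k k')
      (Set.left_mem_Icc.mpr hkk') (Set.right_mem_Icc.mpr hkk')
    simpa [Real.norm_eq_abs, abs_of_nonneg (sub_nonneg.mpr hkk')] using this
  -- operator equation
  have heq : α • x + (ContinuousLinearMap.adjoint A) (A x) = (ContinuousLinearMap.adjoint A) y := by
    have h := congrArg (fun T : X →L[ℝ] X => T ((ContinuousLinearMap.adjoint A) y)) hB₂
    simpa [ContinuousLinearMap.comp_apply, ContinuousLinearMap.add_apply,
      ContinuousLinearMap.smul_apply, hx] using h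
  have hinner : α * ‖x‖ ^ 2 + ‖A x‖ ^ 2 = inner ℝ y (A x) := by
    have h1 : (inner ℝ (α • x + (ContinuousLinearMap.adjoint A) (A x)) x : ℝ)
        = inner ℝ ((ContinuousLinearMap.adjoint A) y) x := by rw [heq]
    rw [inner_add_left, real_inner_smul_left, ContinuousLinearMap.adjoint_inner_left,
      ContinuousLinearMap.adjoint_inner_left, real_inner_self_eq_norm_sq] at h1
    rw [← h1, real_inner_self_eq_norm_sq]
  have hle : α * ‖x‖ ^ 2 + ‖A x‖ ^ 2 ≤ ‖y‖ * ‖A x‖ := by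
    rw [hinner]; exact real_inner_le_norm y (A x)
  have key : α * ‖x‖ ^ 2 ≤ ‖y‖ ^ 2 / 4 := by
    nlinarith [sq_nonneg (‖A x‖ - ‖y‖ / 2)]
  have hgoal : ‖x‖ * (2 * Real.sqrt α) ≤ d₂ * (k' - k) := by
    have h2 : ‖x‖ * (2 * Real.sqrt α) ≤ ‖y‖ := by
      nlinarith [sq_nonneg (‖x‖ * (2 * Real.sqrt α) - ‖y‖), norm_nonneg x, norm_nonneg y,
        mul_nonneg (norm_nonneg x) (by positivity : (0:ℝ) ≤ 2 * Real.sqrt α)]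
    linarith
  have : ‖(B ∘L ContinuousLinearMap.adjoint A) y‖ = ‖x‖ := by
    simp [hx, ContinuousLinearMap.comp_apply]
  rw [this, div_mul_eq_mul_div, le_div_iff₀ (by positivity)]
  linarith [hgoal]
end

section
/- Let X and Y be real Hilbert spaces and F : X × ℝ → Y a map which is Fréchet differentiable in its first variable, such that for all r₁, r₂, r ∈ X and k₁, k₂, k ∈ ℝ: ‖∂_rF(r₁,k) − ∂_rF(r₂,k)‖ ≤ d₃‖r₁ − r₂‖, ‖∂_rF(r,k₁) − ∂_rF(r,k₂)‖ ≤ d₄|k₁ − k₂|, and ‖F(r₁,k) − F(r₂,k)‖ ≤ d₁‖r₁ − r₂‖. Let r̃ ∈ X and k ∈ ℝ satisfy F(r̃,k) = 0, and let α > 0. Then for every r ∈ X and k' ∈ ℝ, ‖(R_α(∂_rF(r,k')) − R_α(∂_rF(r̃,k))) F(r,k)‖ ≤ (9d₁/(4α)) (d₄|k' − k| + d₃‖r̃ − r‖) ‖r̃ − r‖. -/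
open ContinuousLinearMap
set_option maxHeartbeats 1000000

section Aux
variable {X Y : Type*}
  [NormedAddCommGroup X] [InnerProductSpace ℝ X] [CompleteSpace X]
  [NormedAddCommGroup Y] [InnerProductSpace ℝ Y] [CompleteSpace Y]

lemma stmt7_aux_inner (A : X →L[ℝ] Y) (α : ℝ) (x : X) :
    (inner ℝ ((α • (1 : X →L[ℝ] X) + adjoint A ∘L A) x) x : ℝ)
      = α * ‖x‖ ^ 2 + ‖A x‖ ^ 2 := by
  simp [inner_add_left, real_inner_smul_left, ContinuousLinearMap.adjoint_inner_left,
    real_inner_self_eq_norm_sq]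

lemma stmt7_norm_inv (A : X →L[ℝ] Y) {α : ℝ} (hα : 0 < α) (B : X →L[ℝ] X)
    (hB : (α • (1 : X →L[ℝ] X) + adjoint A ∘L A) ∘L B = 1) (z : X) :
    ‖B z‖ ≤ ‖z‖ / α := by
  have hx : (α • (1 : X →L[ℝ] X) + adjoint A ∘L A) (B z) = z := by
    have := congrArg (fun T => T z) hB; simpa using this
  have h1 := stmt7_aux_inner A α (B z)
  rw [hx] at h1
  have h2 : (inner ℝ z (B z) : ℝ) ≤ ‖z‖ * ‖B z‖ := real_inner_le_norm z (B z)
  rcases (norm_nonneg (B z)).eq_or_lt with h0 | h0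
  · rw [← h0]; positivity
  · rw [le_div_iff₀ hα]
    nlinarith [sq_nonneg ‖A (B z)‖]

lemma stmt7_sq_reg (A : X →L[ℝ] Y) {α : ℝ} (hα : 0 < α) (B : X →L[ℝ] X)
    (hB : (α • (1 : X →L[ℝ] X) + adjoint A ∘L A) ∘L B = 1) (y : Y) :
    4 * α * ‖B (adjoint A y)‖ ^ 2 ≤ ‖y‖ ^ 2 := by
  set x := B (adjoint A y) with hxdef
  have hx : (α • (1 : X →L[ℝ] X) + adjoint A ∘L A) x = adjoint A y := by
    have := congrArg (fun T => T (adjoint A y)) hB; simpa using this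
  have h1 := stmt7_aux_inner A α x
  rw [hx, ContinuousLinearMap.adjoint_inner_left] at h1
  have h2 : (inner ℝ y (A x) : ℝ) ≤ ‖y‖ * ‖A x‖ := real_inner_le_norm y (A x)
  nlinarith [sq_nonneg (‖y‖ - 2 * ‖A x‖)]

lemma stmt7_norm_AregA (A : X →L[ℝ] Y) {α : ℝ} (hα : 0 < α) (B : X →L[ℝ] X)
    (hB : (α • (1 : X →L[ℝ] X) + adjoint A ∘L A) ∘L B = 1) (y : Y) :
    ‖A (B (adjoint A y))‖ ≤ ‖y‖ := by
  set x := B (adjoint A y) with hxdef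
  have hx : (α • (1 : X →L[ℝ] X) + adjoint A ∘L A) x = adjoint A y := by
    have := congrArg (fun T => T (adjoint A y)) hB; simpa using this
  have h1 := stmt7_aux_inner A α x
  rw [hx, ContinuousLinearMap.adjoint_inner_left] at h1
  have h2 : (inner ℝ y (A x) : ℝ) ≤ ‖y‖ * ‖A x‖ := real_inner_le_norm y (A x)
  rcases (norm_nonneg (A x)).eq_or_lt with h0 | h0
  · rw [← h0]; positivity
  · nlinarith [sq_nonneg ‖x‖]

lemma stmt7_main (A At : X →L[ℝ] Y) {α : ℝ} (hα : 0 < α) (B Bt : X →L[ℝ] X)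
    (hB₁ : B ∘L (α • (1 : X →L[ℝ] X) + adjoint A ∘L A) = 1)
    (hB₂ : (α • (1 : X →L[ℝ] X) + adjoint A ∘L A) ∘L B = 1)
    (hBt₂ : (α • (1 : X →L[ℝ] X) + adjoint At ∘L At) ∘L Bt = 1)
    (v : Y) :
    ‖(B ∘L adjoint A - Bt ∘L adjoint At) v‖ ≤
      9 / (4 * α) * (‖A - At‖ * ‖v‖) := by
  set δ := ‖A - At‖ with hδdef
  have hδ0 : 0 ≤ δ := norm_nonneg _
  set w := Bt (adjoint At v) with hwdef
  -- w satisfies α w + Ã*Ã w = Ã* v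
  have hw : α • w + adjoint At (At w) = adjoint At v := by
    have := congrArg (fun T => T (adjoint At v)) hBt₂; simpa using this
  -- B (α w + A*A w) = w
  have hBw : B (α • w + adjoint A (A w)) = w := by
    have := congrArg (fun T => T w) hB₁; simpa using this
  set z₁ := adjoint A v - adjoint At v with hz₁
  set z₂ := adjoint At (At w) - adjoint A (At w) with hz₂
  set z₃ := adjoint A (At w) - adjoint A (A w) with hz₃
  have key : (B ∘L adjoint A - Bt ∘L adjoint At) v = B z₁ + B z₂ + B z₃ := by
    have hsum : z₁ + z₂ + z₃ = adjoint A v - (α • w + adjoint A (A w)) := by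
      have h2 : adjoint At (At w) = adjoint At v - α • w := by
        rw [← hw]; abel
      rw [hz₁, hz₂, hz₃, h2]; abel
    have : B z₁ + B z₂ + B z₃ = B (z₁ + z₂ + z₃) := by
      rw [map_add, map_add]
    rw [this, hsum, map_sub, hBw]
    simp [ContinuousLinearMap.sub_apply, ContinuousLinearMap.comp_apply, hwdef]
  rw [key]
  -- bounds for each term
  have hadj : ∀ u : Y, ‖(adjoint A - adjoint At) u‖ ≤ δ * ‖u‖ := by
    intro u
    calc ‖(adjoint A - adjoint At) u‖ ≤ ‖adjoint A - adjoint At‖ * ‖u‖ :=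
          le_opNorm _ u
      _ = δ * ‖u‖ := by rw [← map_sub, LinearIsometryEquiv.norm_map]
  -- term 1
  have hz₁n : ‖z₁‖ ≤ δ * ‖v‖ := by
    have := hadj v; simpa [hz₁] using this
  have ht₁ : ‖B z₁‖ ≤ δ * ‖v‖ / α :=
    le_trans (stmt7_norm_inv A hα B hB₂ z₁) (by gcongr)
  -- term 2
  have hAtw : ‖At w‖ ≤ ‖v‖ := stmt7_norm_AregA At hα Bt hBt₂ v
  have hz₂n : ‖z₂‖ ≤ δ * ‖v‖ := by
    have h := hadj (At w)
    have : ‖z₂‖ = ‖(adjoint A - adjoint At) (At w)‖ := by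
      rw [hz₂, ← norm_neg]; congr 1; simp
    rw [this]
    calc ‖(adjoint A - adjoint At) (At w)‖ ≤ δ * ‖At w‖ := h
      _ ≤ δ * ‖v‖ := by gcongr
  have ht₂ : ‖B z₂‖ ≤ δ * ‖v‖ / α :=
    le_trans (stmt7_norm_inv A hα B hB₂ z₂) (by gcongr)
  -- term 3
  have hz₃eq : z₃ = adjoint A ((At - A) w) := by
    rw [hz₃]; simp [map_sub]
  have hu : ‖(At - A) w‖ ≤ δ * ‖w‖ := by
    calc ‖(At - A) w‖ ≤ ‖At - A‖ * ‖w‖ := le_opNorm _ w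
      _ = δ * ‖w‖ := by rw [norm_sub_rev]
  have hw2 : 4 * α * ‖w‖ ^ 2 ≤ ‖v‖ ^ 2 := stmt7_sq_reg At hα Bt hBt₂ v
  have ht₃sq : 4 * α * ‖B z₃‖ ^ 2 ≤ ‖(At - A) w‖ ^ 2 := by
    rw [hz₃eq]; exact stmt7_sq_reg A hα B hB₂ ((At - A) w)
  have ht₃ : ‖B z₃‖ ≤ δ * ‖v‖ / (4 * α) := by
    have hu2 : ‖(At - A) w‖ ^ 2 ≤ δ ^ 2 * ‖w‖ ^ 2 := by
      nlinarith [norm_nonneg ((At - A) w), norm_nonneg w]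
    have hsq : (4 * α * ‖B z₃‖) ^ 2 ≤ (δ * ‖v‖) ^ 2 := by
      calc (4 * α * ‖B z₃‖) ^ 2 = 4 * α * (4 * α * ‖B z₃‖ ^ 2) := by ring
        _ ≤ 4 * α * ‖(At - A) w‖ ^ 2 :=
            mul_le_mul_of_nonneg_left ht₃sq (by positivity)
        _ ≤ 4 * α * (δ ^ 2 * ‖w‖ ^ 2) :=
            mul_le_mul_of_nonneg_left hu2 (by positivity)
        _ = δ ^ 2 * (4 * α * ‖w‖ ^ 2) := by ring
        _ ≤ δ ^ 2 * ‖v‖ ^ 2 := mul_le_mul_of_nonneg_left hw2 (by positivity)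
        _ = (δ * ‖v‖) ^ 2 := by ring
    have h0 : (0:ℝ) ≤ 4 * α * ‖B z₃‖ := by positivity
    have h1 : (0:ℝ) ≤ δ * ‖v‖ := by positivity
    have h3 := Real.sqrt_le_sqrt hsq
    rw [Real.sqrt_sq h0, Real.sqrt_sq h1] at h3
    rw [le_div_iff₀ (by positivity)]
    linarith
  calc ‖B z₁ + B z₂ + B z₃‖ ≤ ‖B z₁‖ + ‖B z₂‖ + ‖B z₃‖ := norm_add₃_le
    _ ≤ δ * ‖v‖ / α + δ * ‖v‖ / α + δ * ‖v‖ / (4 * α) := by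
        gcongr <;> assumption
    _ = 9 / (4 * α) * (δ * ‖v‖) := by field_simp; ring

end Aux


/-- Perturbation bound for the regularized pseudoinverse applied to the data misfit:
if `F : X × ℝ → Y` is differentiable in its first variable with the stated Lipschitz
bounds, `F(r̃,k) = 0` and `α > 0`, then for every `r ∈ X` and `k' ∈ ℝ`,
`‖(R_α(∂_rF(r,k')) − R_α(∂_rF(r̃,k))) F(r,k)‖ ≤ (9d₁/(4α))(d₄|k' − k| + d₃‖r̃ − r‖)‖r̃ − r‖`. -/
theorem stmt_7 {X Y : Type*}
    [NormedAddCommGroup X] [InnerProductSpace ℝ X] [CompleteSpace X]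
    [NormedAddCommGroup Y] [InnerProductSpace ℝ Y] [CompleteSpace Y]
    (F : X × ℝ → Y) (DF : X → ℝ → (X →L[ℝ] Y))
    (hDF : ∀ (r : X) (κ : ℝ), HasFDerivAt (fun r' => F (r', κ)) (DF r κ) r)
    (d₁ d₃ d₄ : ℝ) (hd₁ : 0 < d₁) (hd₃ : 0 < d₃) (hd₄ : 0 < d₄)
    (hLipr : ∀ (r₁ r₂ : X) (κ : ℝ), ‖DF r₁ κ - DF r₂ κ‖ ≤ d₃ * ‖r₁ - r₂‖)
    (hLipk : ∀ (r : X) (κ₁ κ₂ : ℝ), ‖DF r κ₁ - DF r κ₂‖ ≤ d₄ * |κ₁ - κ₂|)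
    (hLipF : ∀ (r₁ r₂ : X) (κ : ℝ), ‖F (r₁, κ) - F (r₂, κ)‖ ≤ d₁ * ‖r₁ - r₂‖)
    (rt : X) (k : ℝ) (hrt : F (rt, k) = 0)
    (α : ℝ) (hα : 0 < α)
    (r : X) (k' : ℝ)
    (B Bt : X →L[ℝ] X)
    (hB₁ : B ∘L (α • (1 : X →L[ℝ] X) +
      ContinuousLinearMap.adjoint (DF r k') ∘L DF r k') = 1)
    (hB₂ : (α • (1 : X →L[ℝ] X) +
      ContinuousLinearMap.adjoint (DF r k') ∘L DF r k') ∘L B = 1)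
    (hBt₁ : Bt ∘L (α • (1 : X →L[ℝ] X) +
      ContinuousLinearMap.adjoint (DF rt k) ∘L DF rt k) = 1)
    (hBt₂ : (α • (1 : X →L[ℝ] X) +
      ContinuousLinearMap.adjoint (DF rt k) ∘L DF rt k) ∘L Bt = 1) :
    ‖(B ∘L ContinuousLinearMap.adjoint (DF r k') -
        Bt ∘L ContinuousLinearMap.adjoint (DF rt k)) (F (r, k))‖ ≤
      9 * d₁ / (4 * α) * (d₄ * |k' - k| + d₃ * ‖rt - r‖) * ‖rt - r‖ := by
  have hmain := stmt7_main (DF r k') (DF rt k) hα B Bt hB₁ hB₂ hBt₂ (F (r, k))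
  have hδ : ‖DF r k' - DF rt k‖ ≤ d₄ * |k' - k| + d₃ * ‖rt - r‖ := by
    calc ‖DF r k' - DF rt k‖ ≤ ‖DF r k' - DF r k‖ + ‖DF r k - DF rt k‖ :=
          norm_sub_le_norm_sub_add_norm_sub _ _ _
      _ ≤ d₄ * |k' - k| + d₃ * ‖r - rt‖ :=
          add_le_add (hLipk r k' k) (hLipr r rt k)
      _ = d₄ * |k' - k| + d₃ * ‖rt - r‖ := by rw [norm_sub_rev]
  have hv : ‖F (r, k)‖ ≤ d₁ * ‖rt - r‖ := by
    have h := hLipF r rt k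
    rw [hrt, sub_zero, norm_sub_rev] at h
    exact h
  refine hmain.trans ?_
  have hmul : ‖DF r k' - DF rt k‖ * ‖F (r, k)‖ ≤
      (d₄ * |k' - k| + d₃ * ‖rt - r‖) * (d₁ * ‖rt - r‖) :=
    mul_le_mul hδ hv (norm_nonneg _) (by positivity)
  calc 9 / (4 * α) * (‖DF r k' - DF rt k‖ * ‖F (r, k)‖)
      ≤ 9 / (4 * α) * ((d₄ * |k' - k| + d₃ * ‖rt - r‖) * (d₁ * ‖rt - r‖)) :=
        mul_le_mul_of_nonneg_left hmul (by positivity)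
    _ = 9 * d₁ / (4 * α) * (d₄ * |k' - k| + d₃ * ‖rt - r‖) * ‖rt - r‖ := by
        field_simp
end

section
/- Single noisy projected Newton step at a fixed frequency: let X and Y be real Hilbert spaces and F : X → Y twice continuously Fréchet differentiable with ‖F'(x)‖ ≤ d₁ and ‖F''(x)‖ ≤ d₃ for all x ∈ X. Let X' ⊆ X be a closed subspace with orthogonal projection P, let r̃ ∈ X' satisfy F(r̃) = 0, and let σ ≥ 0 satisfy ‖F'(r̃)x‖ ≥ σ‖x‖ for all x ∈ X. Let α > 0, let f ∈ Y with ‖f‖ ≤ δ̃, let r ∈ X', and define r⁺ := r − P R_α(F'(r)) (F(r) + f). Then ‖r̃ − r⁺‖ ≤ δ̃/(2√α) + (α/(α + σ²)) ‖r̃ − r‖ + (9d₁d₃/(4α) + d₃/(4√α)) ‖r̃ − r‖². -/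
set_option maxHeartbeats 1600000
open Set
open scoped RealInnerProductSpace

lemma taylor_aux {X Y : Type*} [NormedAddCommGroup X] [NormedSpace ℝ X]
    [NormedAddCommGroup Y] [NormedSpace ℝ Y]
    (F : X → Y) (hF : ContDiff ℝ 2 F) (d₃ : ℝ)
    (hlip : ∀ x y : X, ‖fderiv ℝ F x - fderiv ℝ F y‖ ≤ d₃ * ‖x - y‖)
    (a b : X) :
    ‖F b - F a - fderiv ℝ F a (b - a)‖ ≤ d₃ / 2 * ‖b - a‖ ^ 2 := by
  set e := b - a with he
  set φ : ℝ → Y := fun t => F (a + t • e) - t • (fderiv ℝ F a e) - F a with hφ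
  set φ' : ℝ → Y := fun t => fderiv ℝ F (a + t • e) e - fderiv ℝ F a e with hφ'
  have hder : ∀ t : ℝ, HasDerivAt φ (φ' t) t := by
    intro t
    have h1 : HasDerivAt (fun t : ℝ => a + t • e) e t := by
      simpa using ((hasDerivAt_id t).smul_const e).const_add a
    have h2 : HasFDerivAt F (fderiv ℝ F (a + t • e)) (a + t • e) :=
      ((hF.differentiable (by norm_num)) _).hasFDerivAt
    have h3 := h2.comp_hasDerivAt t h1
    have h4 : HasDerivAt (fun t : ℝ => t • (fderiv ℝ F a e)) (fderiv ℝ F a e) t := by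
      simpa using (hasDerivAt_id t).smul_const (fderiv ℝ F a e)
    simpa [hφ, hφ'] using (h3.sub h4).sub_const (F a)
  have key : ∀ x ∈ Icc (0:ℝ) 1, ‖φ x‖ ≤ d₃ * ‖e‖ ^ 2 / 2 * x ^ 2 := by
    refine image_norm_le_of_norm_deriv_right_le_deriv_boundary
      (f' := φ') (B := fun t => d₃ * ‖e‖ ^ 2 / 2 * t ^ 2) (B' := fun t => d₃ * ‖e‖ ^ 2 * t)
      (fun t _ => (hder t).continuousAt.continuousWithinAt)
      (fun t _ => (hder t).hasDerivWithinAt) (by simp [hφ]) (fun x => ?_) (fun t ht => ?_)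
    · have := (hasDerivAt_pow 2 x).const_mul (d₃ * ‖e‖ ^ 2 / 2)
      exact this.congr_deriv (by push_cast; ring)
    · 
      have h1 : ‖φ' t‖ ≤ ‖fderiv ℝ F (a + t • e) - fderiv ℝ F a‖ * ‖e‖ := by
        simpa [hφ'] using (fderiv ℝ F (a + t • e) - fderiv ℝ F a).le_opNorm e
      have h2 : ‖fderiv ℝ F (a + t • e) - fderiv ℝ F a‖ ≤ d₃ * (t * ‖e‖) := by
        have := hlip (a + t • e) a
        simpa [norm_smul, abs_of_nonneg ht.1] using this
      have he0 : (0:ℝ) ≤ ‖e‖ := norm_nonneg _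
      calc ‖φ' t‖ ≤ d₃ * (t * ‖e‖) * ‖e‖ :=
            h1.trans (by nlinarith [norm_nonneg (fderiv ℝ F (a + t • e) - fderiv ℝ F a)])
        _ = d₃ * ‖e‖ ^ 2 * t := by ring
  have := key 1 (by norm_num)
  have hφ1 : φ 1 = F b - F a - fderiv ℝ F a e := by
    simp [hφ, he]
    abel
  rw [hφ1] at this
  calc ‖F b - F a - fderiv ℝ F a e‖ ≤ d₃ * ‖e‖ ^ 2 / 2 * 1 ^ 2 := this
    _ = d₃ / 2 * ‖e‖ ^ 2 := by ring

open ContinuousLinearMap in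
lemma inner_T_aux {X Y : Type*}
    [NormedAddCommGroup X] [InnerProductSpace ℝ X] [CompleteSpace X]
    [NormedAddCommGroup Y] [InnerProductSpace ℝ Y] [CompleteSpace Y]
    (A : X →L[ℝ] Y) (α : ℝ) (u : X) :
    ⟪(α • (1 : X →L[ℝ] X) + ContinuousLinearMap.adjoint A ∘L A) u, u⟫
      = α * ‖u‖ ^ 2 + ‖A u‖ ^ 2 := by
  simp [ContinuousLinearMap.add_apply, ContinuousLinearMap.smul_apply,
    ContinuousLinearMap.comp_apply, inner_add_left, real_inner_smul_left,
    ContinuousLinearMap.adjoint_inner_left, real_inner_self_eq_norm_sq]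

lemma hBe_scalar {α σ d₁ d₃ E s a a0 ip : ℝ} (hα : 0 < α) (hσ : 0 ≤ σ)
    (hd₁ : 0 < d₁) (hd₃ : 0 < d₃) (hE0 : 0 ≤ E) (hs0 : 0 ≤ s)
    (ha : 0 ≤ a) (ha0 : 0 ≤ a0)
    (h1 : ip = α * s ^ 2 + a ^ 2) (h2 : ip ≤ E * s)
    (hσu : σ * s ≤ a0) (hA₀u : a0 ≤ d₁ * s) (hAu : a ≤ d₁ * s)
    (htri : a0 ≤ a + d₃ * E * s) (hsE : α * s ≤ E) :
    α * s ≤ α / (α + σ ^ 2) * E + 2 * d₁ * d₃ / α * E ^ 2 := by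
  have hαs : 0 < α + σ ^ 2 := by positivity
  rcases eq_or_lt_of_le hs0 with h | hspos
  · rw [← h, mul_zero]; positivity
  · have a0sq : a0 ^ 2 ≤ a ^ 2 + 2 * d₁ * d₃ * E * s ^ 2 := by
      rcases le_or_gt a0 a with hc | hc
      · nlinarith [pow_le_pow_left₀ ha0 hc 2,
          mul_nonneg (mul_nonneg (mul_nonneg hd₁.le hd₃.le) hE0) (sq_nonneg s)]
      · have h7 : a0 - a ≤ d₃ * E * s := by linarith
        have h8 : a0 + a ≤ 2 * d₁ * s := by linarith
        nlinarith [mul_le_mul h7 h8 (by linarith) (by positivity)]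
    have hσsq : σ ^ 2 * s ^ 2 ≤ a0 ^ 2 := by nlinarith [mul_nonneg hσ hs0]
    have key : (α + σ ^ 2) * s ^ 2 ≤ E * s + 2 * d₁ * d₃ * E * s ^ 2 := by
      nlinarith
    have step1 : (α + σ ^ 2) * s ≤ E + 2 * d₁ * d₃ * E * s := by
      nlinarith [key, hspos]
    have key3 : (α + σ ^ 2) * (α * s) ≤ α * E + 2 * d₁ * d₃ * E ^ 2 := by
      nlinarith [mul_le_mul_of_nonneg_left step1 hα.le,
        mul_le_mul_of_nonneg_left hsE
          (mul_nonneg (mul_nonneg (mul_nonneg (by norm_num : (0:ℝ) ≤ 2) hd₁.le)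
            hd₃.le) hE0)]
    rw [div_mul_eq_mul_div, div_mul_eq_mul_div, div_add_div _ _ (ne_of_gt hαs)
      (ne_of_gt hα), le_div_iff₀ (by positivity)]
    nlinarith [mul_le_mul_of_nonneg_left key3 hα.le,
      mul_nonneg (mul_nonneg (mul_nonneg (by norm_num : (0:ℝ) ≤ 2) hd₁.le) hd₃.le)
        (mul_nonneg (sq_nonneg E) (sq_nonneg σ))]


/-- Single noisy projected Newton step at a fixed frequency. -/
theorem stmt_11 {X Y : Type*}
    [NormedAddCommGroup X] [InnerProductSpace ℝ X] [CompleteSpace X]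
    [NormedAddCommGroup Y] [InnerProductSpace ℝ Y] [CompleteSpace Y]
    (F : X → Y) (hF : ContDiff ℝ 2 F)
    (d₁ d₃ : ℝ) (hd₁ : 0 < d₁) (hd₃ : 0 < d₃)
    (hF' : ∀ x : X, ‖fderiv ℝ F x‖ ≤ d₁)
    (hF'' : ∀ x : X, ‖fderiv ℝ (fderiv ℝ F) x‖ ≤ d₃)
    (X' : Submodule ℝ X) (hX' : IsClosed (X' : Set X))
    (P : X →L[ℝ] X) (hP : ∀ x : X, P x ∈ X' ∧ x - P x ∈ X'ᗮ)
    (rt : X) (hrtmem : rt ∈ X') (hrt : F rt = 0)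
    (σ : ℝ) (hσ : 0 ≤ σ) (hlow : ∀ x : X, σ * ‖x‖ ≤ ‖fderiv ℝ F rt x‖)
    (α : ℝ) (hα : 0 < α)
    (δt : ℝ) (hδt : 0 ≤ δt) (f : Y) (hf : ‖f‖ ≤ δt)
    (r : X) (hrmem : r ∈ X')
    (B : X →L[ℝ] X)
    (hB₁ : B ∘L (α • (1 : X →L[ℝ] X) +
      ContinuousLinearMap.adjoint (fderiv ℝ F r) ∘L fderiv ℝ F r) = 1)
    (hB₂ : (α • (1 : X →L[ℝ] X) +
      ContinuousLinearMap.adjoint (fderiv ℝ F r) ∘L fderiv ℝ F r) ∘L B = 1)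
    (rplus : X)
    (hrplus : rplus =
      r - P ((B ∘L ContinuousLinearMap.adjoint (fderiv ℝ F r)) (F r + f))) :
    ‖rt - rplus‖ ≤ δt / (2 * Real.sqrt α) + α / (α + σ ^ 2) * ‖rt - r‖ +
      (9 * d₁ * d₃ / (4 * α) + d₃ / (4 * Real.sqrt α)) * ‖rt - r‖ ^ 2 := by
  set A := fderiv ℝ F r with hA
  set A₀ := fderiv ℝ F rt with hA₀
  set Aad := ContinuousLinearMap.adjoint A with hAad
  set T := α • (1 : X →L[ℝ] X) + Aad ∘L A with hT
  set e := rt - r with he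
  set E := ‖e‖ with hE
  have hE0 : 0 ≤ E := norm_nonneg _
  have hem : e ∈ X' := by rw [he]; exact X'.sub_mem hrtmem hrmem
  clear_value A A₀ Aad T e E
  have hsa : 0 < Real.sqrt α := Real.sqrt_pos.mpr hα
  have hinvTB : ∀ z, T (B z) = z := by
    intro z; have := DFunLike.congr_fun hB₂ z; simpa using this
  have hinvBT : ∀ z, B (T z) = z := by
    intro z; have := DFunLike.congr_fun hB₁ z; simpa using this
  have hTinner : ∀ u, ⟪T u, u⟫ = α * ‖u‖ ^ 2 + ‖A u‖ ^ 2 := by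
    intro u; rw [hT, hAad]; exact inner_T_aux A α u
  -- Lipschitz bound on the derivative
  have hlip : ∀ x y : X, ‖fderiv ℝ F x - fderiv ℝ F y‖ ≤ d₃ * ‖x - y‖ := by
    intro x y
    exact Convex.norm_image_sub_le_of_norm_fderiv_le
      (fun z _ => ((hF.fderiv_right (m := 1) (by norm_num)).differentiable (by norm_num)) z)
      (fun z _ => hF'' z) convex_univ (Set.mem_univ y) (Set.mem_univ x)
  -- bound ‖B z‖ ≤ ‖z‖ / α
  have hB1 : ∀ z, ‖B z‖ ≤ ‖z‖ / α := by
    intro z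
    have h1 : ⟪z, B z⟫ = α * ‖B z‖ ^ 2 + ‖A (B z)‖ ^ 2 := by
      have h := hTinner (B z); rw [hinvTB z] at h; exact h
    have h2 : ⟪z, B z⟫ ≤ ‖z‖ * ‖B z‖ := real_inner_le_norm z (B z)
    rcases eq_or_lt_of_le (norm_nonneg (B z)) with h | h
    · rw [← h]; positivity
    · rw [le_div_iff₀ hα]
      nlinarith [sq_nonneg (‖A (B z)‖)]
  -- bound ‖B (Aad y)‖ ≤ ‖y‖ / (2 √α)
  have hB2 : ∀ y, ‖B (Aad y)‖ ≤ ‖y‖ / (2 * Real.sqrt α) := by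
    intro y
    set u := B (Aad y) with hu
    have h1 : ⟪Aad y, u⟫ = α * ‖u‖ ^ 2 + ‖A u‖ ^ 2 := by
      have h := hTinner u; rw [hu, hinvTB (Aad y)] at h; exact h
    have h2 : ⟪Aad y, u⟫ = ⟪y, A u⟫ := by
      rw [hAad]; exact ContinuousLinearMap.adjoint_inner_left A u y
    have h3 : ⟪y, A u⟫ ≤ ‖y‖ * ‖A u‖ := real_inner_le_norm _ _
    have h4 : ‖u‖ ^ 2 ≤ (‖y‖ / (2 * Real.sqrt α)) ^ 2 := by
      have hsq : Real.sqrt α ^ 2 = α := Real.sq_sqrt hα.le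
      rw [div_pow, mul_pow, hsq]
      rw [le_div_iff₀ (by positivity)]
      nlinarith [sq_nonneg (‖y‖ - 2 * ‖A u‖)]
    have := Real.sqrt_le_sqrt h4
    rwa [Real.sqrt_sq (norm_nonneg u), Real.sqrt_sq (by positivity)] at this
  -- projection is a contraction
  have hPn : ∀ x : X, ‖P x‖ ≤ ‖x‖ := by
    intro x
    obtain ⟨h1, h2⟩ := hP x
    have h0 : ⟪P x, x - P x⟫ = 0 := ((Submodule.mem_orthogonal X' _).mp h2) (P x) h1
    have hx : ‖x‖ ^ 2 = ‖P x‖ ^ 2 + 2 * ⟪P x, x - P x⟫ + ‖x - P x‖ ^ 2 := by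
      nth_rewrite 1 [show x = P x + (x - P x) by abel]
      exact norm_add_sq_real _ _
    nlinarith [sq_nonneg (‖x - P x‖), norm_nonneg x, norm_nonneg (P x)]
  -- P fixes e
  have hPe : P e = e := by
    obtain ⟨h1, h2⟩ := hP e
    have hm : e - P e ∈ X' := X'.sub_mem hem h1
    have h0 : ⟪e - P e, e - P e⟫ = 0 := ((Submodule.mem_orthogonal X' _).mp h2) _ hm
    have : e - P e = 0 := inner_self_eq_zero.mp h0
    have := sub_eq_zero.mp this
    exact this.symm
  -- Taylor remainder
  have hQ : ‖F r + A e‖ ≤ d₃ / 2 * E ^ 2 := by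
    have h := taylor_aux F hF d₃ hlip r rt
    rw [hrt, zero_sub, ← hA, ← he] at h
    have hre : -F r - A e = -(F r + A e) := by abel
    rw [hre, norm_neg, ← hE] at h
    exact h
  -- decomposition of the step
  have hdec : rt - rplus = α • P (B e) + P (B (Aad (F r + A e))) + P (B (Aad f)) := by
    have h2 : B (Aad (A e)) = e - α • B e := by
      have h3 : Aad (A e) = T e - α • e := by
        rw [hT]; simp [ContinuousLinearMap.add_apply, ContinuousLinearMap.smul_apply]
      rw [h3, map_sub, hinvBT, map_smul]
    have h1 : B (Aad (F r + f)) =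
        B (Aad (F r + A e)) - (e - α • B e) + B (Aad f) := by
      rw [← h2, ← map_sub, ← map_add, ← map_sub, ← map_add]
      congr 2
      abel
    rw [hrplus]
    have : rt - (r - P ((B ∘L Aad) (F r + f))) = e + P (B (Aad (F r + f))) := by
      rw [ContinuousLinearMap.comp_apply]; rw [he]; abel
    rw [this, h1]
    simp only [map_add, map_sub, map_smul, hPe]
    abel
  -- bound α ‖B e‖
  have hBe : α * ‖B e‖ ≤ α / (α + σ ^ 2) * E + 2 * d₁ * d₃ / α * E ^ 2 := by
    set s := ‖B e‖ with hs
    have hs0 : 0 ≤ s := hs ▸ norm_nonneg _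
    have h1 : ⟪e, B e⟫ = α * s ^ 2 + ‖A (B e)‖ ^ 2 := by
      have h := hTinner (B e); rw [hinvTB e] at h; rw [hs]; exact h
    have h2 : ⟪e, B e⟫ ≤ E * s := by
      rw [hE, hs]; exact real_inner_le_norm e (B e)
    have hσu : σ * s ≤ ‖A₀ (B e)‖ := by rw [hs]; exact hlow (B e)
    have hA₀u : ‖A₀ (B e)‖ ≤ d₁ * s := by
      calc ‖A₀ (B e)‖ ≤ ‖A₀‖ * s := by rw [hs]; exact A₀.le_opNorm (B e)
        _ ≤ d₁ * s := by gcongr; rw [hA₀]; exact hF' rt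
    have hAu : ‖A (B e)‖ ≤ d₁ * s := by
      calc ‖A (B e)‖ ≤ ‖A‖ * s := by rw [hs]; exact A.le_opNorm (B e)
        _ ≤ d₁ * s := by gcongr; rw [hA]; exact hF' r
    have hdiff : ‖A₀ (B e) - A (B e)‖ ≤ d₃ * E * s := by
      calc ‖A₀ (B e) - A (B e)‖ = ‖(A₀ - A) (B e)‖ := by
            rw [ContinuousLinearMap.sub_apply]
        _ ≤ ‖A₀ - A‖ * s := by rw [hs]; exact (A₀ - A).le_opNorm (B e)
        _ ≤ d₃ * E * s := by
            gcongr
            rw [hA₀, hA, hE, he]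
            exact hlip rt r
    have htri : ‖A₀ (B e)‖ ≤ ‖A (B e)‖ + d₃ * E * s := by
      have h5 := norm_sub_norm_le (A₀ (B e)) (A (B e))
      linarith
    have hsE : α * s ≤ E := by
      have h6 := hB1 e; rw [← hE, ← hs] at h6
      rw [mul_comm]; exact (le_div_iff₀ hα).mp h6
    exact hBe_scalar hα hσ hd₁ hd₃ hE0 hs0 (norm_nonneg _) (norm_nonneg _)
      h1 h2 hσu hA₀u hAu htri hsE
  -- assemble
  have hn : ‖rt - rplus‖ ≤ α * ‖B e‖ + ‖B (Aad (F r + A e))‖ + ‖B (Aad f)‖ := by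
    rw [hdec]
    calc ‖α • P (B e) + P (B (Aad (F r + A e))) + P (B (Aad f))‖
        ≤ ‖α • P (B e)‖ + ‖P (B (Aad (F r + A e)))‖ + ‖P (B (Aad f))‖ :=
          norm_add₃_le
      _ ≤ α * ‖B e‖ + ‖B (Aad (F r + A e))‖ + ‖B (Aad f)‖ := by
          have e1 : ‖α • P (B e)‖ = α * ‖P (B e)‖ := by
            rw [norm_smul, Real.norm_eq_abs, abs_of_pos hα]
          rw [e1]
          gcongr
          · exact hPn _
          · exact hPn _
          · exact hPn _
  have hb2 : ‖B (Aad (F r + A e))‖ ≤ (d₃ / 2 * E ^ 2) / (2 * Real.sqrt α) := by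
    calc ‖B (Aad (F r + A e))‖ ≤ ‖F r + A e‖ / (2 * Real.sqrt α) := hB2 _
      _ ≤ (d₃ / 2 * E ^ 2) / (2 * Real.sqrt α) := by gcongr
  have hb3 : ‖B (Aad f)‖ ≤ δt / (2 * Real.sqrt α) := by
    calc ‖B (Aad f)‖ ≤ ‖f‖ / (2 * Real.sqrt α) := hB2 _
      _ ≤ δt / (2 * Real.sqrt α) := by gcongr
  have heq : (d₃ / 2 * E ^ 2) / (2 * Real.sqrt α) = d₃ / (4 * Real.sqrt α) * E ^ 2 := by
    rw [div_mul_eq_mul_div, div_div, div_mul_eq_mul_div]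
    rw [show (2:ℝ) * (2 * Real.sqrt α) = 4 * Real.sqrt α by ring]
  have h9 : 2 * d₁ * d₃ / α * E ^ 2 ≤ 9 * d₁ * d₃ / (4 * α) * E ^ 2 := by
    apply mul_le_mul_of_nonneg_right _ (sq_nonneg E)
    rw [div_le_div_iff₀ hα (by positivity)]
    nlinarith [mul_pos (mul_pos hd₁ hd₃) hα]

  linarith [hn, hBe, hb2, hb3, heq, h9]
end

section
/- Noisy error estimate for the first Newton step after a frequency increment: let X and Y be real Hilbert spaces and F : X × ℝ → Y twice continuously Fréchet differentiable with ‖∂_rF(r,k)‖ ≤ d₁, ‖∂_kF(r,k)‖ ≤ d₂, ‖∂²_{rr}F(r,k)‖ ≤ d₃ and ‖∂²_{kr}F(r,k)‖ ≤ d₄ for all (r,k). Let X' ⊆ X be a closed subspace with orthogonal projection P; let k ≤ k' be reals with Δk := k' − k; let r̃, r̃' ∈ X' satisfy F(r̃, k) = 0, F(r̃', k') = 0 and ‖r̃' − r̃‖ ≤ d₀Δk for some d₀ > 0; let σ ≥ 0 satisfy ‖∂_rF(r̃, k)x‖ ≥ σ‖x‖ for all x ∈ X; let α > 0, let f ∈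 Y with ‖f‖ ≤ δ̃, let r ∈ X', and define r⁺ := r − P R_α(∂_rF(r, k')) (F(r, k') + f). Then ‖r̃' − r⁺‖ ≤ Δk (d₀ + d₂/(2√α)) + δ̃/(2√α) + (α/(α + σ²)) ‖r̃ − r‖ + (9d₁d₄/(4α)) Δk ‖r̃ − r‖ + (9d₁d₃/(4α) + d₃/(4√α)) ‖r̃ − r‖². -/
open ContinuousLinearMap in
lemma aux_T_apply {X Y : Type*}
    [NormedAddCommGroup X] [InnerProductSpace ℝ X] [CompleteSpace X]
    [NormedAddCommGroup Y] [InnerProductSpace ℝ Y] [CompleteSpace Y]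
    (A : X →L[ℝ] Y) (α : ℝ) (x : X) :
    (α • (1 : X →L[ℝ] X) + adjoint A ∘L A) x = α • x + adjoint A (A x) := by
  simp

open ContinuousLinearMap in
lemma aux_inner_T {X Y : Type*}
    [NormedAddCommGroup X] [InnerProductSpace ℝ X] [CompleteSpace X]
    [NormedAddCommGroup Y] [InnerProductSpace ℝ Y] [CompleteSpace Y]
    (A : X →L[ℝ] Y) (α : ℝ) (x : X) :
    inner ℝ ((α • (1 : X →L[ℝ] X) + adjoint A ∘L A) x) x = α * ‖x‖^2 + ‖A x‖^2 := by
  rw [aux_T_apply]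
  rw [inner_add_left, real_inner_smul_left, adjoint_inner_left,
    real_inner_self_eq_norm_sq, real_inner_self_eq_norm_sq]

open ContinuousLinearMap in
lemma aux_R_bound {X Y : Type*}
    [NormedAddCommGroup X] [InnerProductSpace ℝ X] [CompleteSpace X]
    [NormedAddCommGroup Y] [InnerProductSpace ℝ Y] [CompleteSpace Y]
    (A : X →L[ℝ] Y) (B : X →L[ℝ] X) (α : ℝ) (hα : 0 < α)
    (hB₂ : (α • (1 : X →L[ℝ] X) + adjoint A ∘L A) ∘L B = 1) (y : Y) :
    ‖B (adjoint A y)‖ ≤ ‖y‖ / (2 * Real.sqrt α) := by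
  set x := B (adjoint A y) with hx
  have hTx : (α • (1 : X →L[ℝ] X) + adjoint A ∘L A) x = adjoint A y := by
    have := congrArg (fun (L : X →L[ℝ] X) => L (adjoint A y)) hB₂
    simpa using this
  have h1 : α * ‖x‖^2 + ‖A x‖^2 = inner ℝ y (A x) := by
    rw [← aux_inner_T A α x, hTx, adjoint_inner_left]
  have h2 : (inner ℝ y (A x) : ℝ) ≤ ‖y‖ * ‖A x‖ := real_inner_le_norm y (A x)
  have hs : Real.sqrt α > 0 := Real.sqrt_pos.2 hα
  have hsq : Real.sqrt α ^ 2 = α := Real.sq_sqrt hα.le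
  rcases eq_or_ne (‖A x‖) 0 with h0 | h0
  · rw [h0] at h1 h2
    have h1' : α * ‖x‖^2 ≤ 0 := by nlinarith
    have hx2 : ‖x‖^2 ≤ 0 := by
      by_contra hc
      push_neg at hc
      nlinarith
    have hx0 : ‖x‖ = 0 := by
      have := le_antisymm hx2 (sq_nonneg _)
      exact pow_eq_zero_iff (by norm_num) |>.1 this
    rw [hx0]
    positivity
  · have hAx : 0 < ‖A x‖ := lt_of_le_of_ne (norm_nonneg _) (Ne.symm h0)
    have key : 2 * Real.sqrt α * ‖x‖ * ‖A x‖ ≤ ‖y‖ * ‖A x‖ := by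
      nlinarith [sq_nonneg (Real.sqrt α * ‖x‖ - ‖A x‖)]
    rw [div_eq_inv_mul, ← mul_le_mul_iff_of_pos_right hAx]
    calc ‖x‖ * ‖A x‖ ≤ (2 * Real.sqrt α)⁻¹ * (‖y‖ * ‖A x‖) := by
          rw [le_inv_mul_iff₀ (by positivity)]; linarith [key]
      _ = (2 * Real.sqrt α)⁻¹ * ‖y‖ * ‖A x‖ := by ring

open ContinuousLinearMap in
lemma aux_B_bound {X Y : Type*}
    [NormedAddCommGroup X] [InnerProductSpace ℝ X] [CompleteSpace X]
    [NormedAddCommGroup Y] [InnerProductSpace ℝ Y] [CompleteSpace Y]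
    (A : X →L[ℝ] Y) (B : X →L[ℝ] X) (α : ℝ) (hα : 0 < α)
    (hB₂ : (α • (1 : X →L[ℝ] X) + adjoint A ∘L A) ∘L B = 1)
    (s : ℝ) (hs : 0 ≤ s) (hAx : ∀ x, s * ‖x‖ ≤ ‖A x‖) (e : X) :
    (α + s^2) * ‖B e‖ ≤ ‖e‖ := by
  set x := B e with hx
  have hTx : (α • (1 : X →L[ℝ] X) + adjoint A ∘L A) x = e := by
    have := congrArg (fun (L : X →L[ℝ] X) => L e) hB₂
    simpa using this
  have h1 : α * ‖x‖^2 + ‖A x‖^2 = inner ℝ e x := by rw [← aux_inner_T A α x, hTx]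
  have h2 : (inner ℝ e x : ℝ) ≤ ‖e‖ * ‖x‖ := real_inner_le_norm e x
  have h3 : s^2 * ‖x‖^2 ≤ ‖A x‖^2 := by
    have h := hAx x
    nlinarith [mul_self_le_mul_self (mul_nonneg hs (norm_nonneg x)) h]
  have h4 : (α + s^2) * ‖x‖^2 ≤ ‖e‖ * ‖x‖ := by nlinarith
  rcases eq_or_lt_of_le (norm_nonneg x) with h0 | h0
  · rw [← h0]; simpa using norm_nonneg e
  · rw [← mul_le_mul_iff_of_pos_right h0]
    nlinarith

lemma aux_P_norm {X : Type*} [NormedAddCommGroup X] [InnerProductSpace ℝ X]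
    (X' : Submodule ℝ X) (P : X →L[ℝ] X)
    (hP : ∀ x : X, P x ∈ X' ∧ x - P x ∈ X'ᗮ) (x : X) : ‖P x‖ ≤ ‖x‖ := by
  have horth : (inner ℝ (P x) (x - P x) : ℝ) = 0 :=
    (hP x).2 (P x) (hP x).1
  have hdecomp : x = P x + (x - P x) := by abel
  have hpyth : ‖x‖^2 = ‖P x‖^2 + ‖x - P x‖^2 := by
    calc ‖x‖^2 = ‖P x + (x - P x)‖^2 := by rw [← hdecomp]
    _ = ‖P x‖^2 + 2 * inner ℝ (P x) (x - P x) + ‖x - P x‖^2 := norm_add_sq_real _ _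
    _ = ‖P x‖^2 + ‖x - P x‖^2 := by rw [horth]; ring
  have := sq_nonneg ‖x - P x‖
  nlinarith [norm_nonneg (P x), norm_nonneg x]

lemma aux_P_fix {X : Type*} [NormedAddCommGroup X] [InnerProductSpace ℝ X]
    (X' : Submodule ℝ X) (P : X →L[ℝ] X)
    (hP : ∀ x : X, P x ∈ X' ∧ x - P x ∈ X'ᗮ) (e : X) (he : e ∈ X') : P e = e := by
  have h1 : e - P e ∈ X' := Submodule.sub_mem _ he (hP e).1
  have h2 : (inner ℝ (e - P e) (e - P e) : ℝ) = 0 := (hP e).2 (e - P e) h1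
  have := inner_self_eq_zero.1 h2
  have : e - P e = 0 := this
  linear_combination (norm := abel) -this

lemma aux_frac (α σ ε : ℝ) (hα : 0 < α) (hσ : 0 ≤ σ) (hε : 0 ≤ ε) :
    α / (α + (max (σ - ε) 0)^2) ≤ α / (α + σ^2) + 2*σ*ε/α := by
  set s := max (σ - ε) 0 with hsdef
  have hs : 0 ≤ s := le_max_right _ _
  have h1 : σ^2 - s^2 ≤ 2*σ*ε := by
    rcases le_total σ ε with h | h
    · have hσε : σ*σ ≤ σ*ε := mul_le_mul_of_nonneg_left h hσ
      nlinarith [sq_nonneg s]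
    · have hmax : s = σ - ε := max_eq_left (by linarith)
      rw [hmax]; nlinarith
  have h2 : 0 < α + s^2 := by positivity
  have h3 : 0 < α + σ^2 := by positivity
  rw [div_add_div _ _ (ne_of_gt h3) (ne_of_gt hα), div_le_div_iff₀ h2 (by positivity)]
  nlinarith [mul_le_mul_of_nonneg_left h1 (mul_pos hα hα).le,
    mul_nonneg (mul_nonneg (mul_nonneg hσ hε) (sq_nonneg s)) hα.le,
    mul_nonneg (mul_nonneg (mul_nonneg hσ hε) (sq_nonneg σ)) hα.le,
    mul_nonneg (mul_nonneg (mul_nonneg hσ hε) (sq_nonneg s)) (sq_nonneg σ)]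

lemma aux_taylor {Y : Type*} [NormedAddCommGroup Y] [NormedSpace ℝ Y]
    (ψ : ℝ → Y) (ψ' : ℝ → Y) (M : ℝ)
    (hψ : ∀ t, HasDerivAt ψ (ψ' t) t)
    (hbound : ∀ t ∈ Set.Icc (0:ℝ) 1, ‖ψ' t‖ ≤ M * t) :
    ‖ψ 1 - ψ 0‖ ≤ M / 2 := by
  have hB : ∀ x : ℝ, HasDerivAt (fun t : ℝ => M * (t^2/2)) (M * x) x := by
    intro x
    simpa using ((hasDerivAt_pow 2 x).div_const 2).const_mul M
  have key := image_norm_le_of_norm_deriv_right_le_deriv_boundary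
    (f := fun t => ψ t - ψ 0) (f' := ψ') (a := 0) (b := 1)
    (B := fun t => M * (t^2/2)) (B' := fun t => M * t)
    (fun t _ => ((hψ t).continuousAt.sub continuousAt_const).continuousWithinAt)
    (fun x _ => ((hψ x).sub_const (ψ 0)).hasDerivWithinAt)
    (by simp)
    hB
    (fun x hx => hbound x (Set.Ico_subset_Icc_self hx))
  have h1 := key (Set.right_mem_Icc.2 zero_le_one)
  norm_num at h1
  linarith

set_option maxHeartbeats 2000000 in
/-- Noisy error estimate for the first projected Newton step after a frequency
increment. -/
theorem stmt_13 {X Y : Type*}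
    [NormedAddCommGroup X] [InnerProductSpace ℝ X] [CompleteSpace X]
    [NormedAddCommGroup Y] [InnerProductSpace ℝ Y] [CompleteSpace Y]
    (F : X × ℝ → Y) (hF : ContDiff ℝ 2 F)
    (d₀ d₁ d₂ d₃ d₄ : ℝ) (hd₀ : 0 < d₀) (hd₁ : 0 < d₁) (hd₂ : 0 < d₂)
    (hd₃ : 0 < d₃) (hd₄ : 0 < d₄)
    (hFr : ∀ (r : X) (κ : ℝ), ‖fderiv ℝ (fun r' => F (r', κ)) r‖ ≤ d₁)
    (hFk : ∀ (r : X) (κ : ℝ), ‖deriv (fun κ' => F (r, κ')) κ‖ ≤ d₂)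
    (hFrr : ∀ (r : X) (κ : ℝ),
      ‖fderiv ℝ (fun r' => fderiv ℝ (fun r'' => F (r'', κ)) r') r‖ ≤ d₃)
    (hFkr : ∀ (r : X) (κ : ℝ),
      ‖deriv (fun κ' => fderiv ℝ (fun r' => F (r', κ')) r) κ‖ ≤ d₄)
    (X' : Submodule ℝ X) (hX' : IsClosed (X' : Set X))
    (P : X →L[ℝ] X) (hP : ∀ x : X, P x ∈ X' ∧ x - P x ∈ X'ᗮ)
    (k k' : ℝ) (hkk' : k ≤ k')
    (rt rt' : X) (hrtmem : rt ∈ X') (hrt'mem : rt' ∈ X')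
    (hrt : F (rt, k) = 0) (hrt' : F (rt', k') = 0)
    (hclose : ‖rt' - rt‖ ≤ d₀ * (k' - k))
    (σ : ℝ) (hσ : 0 ≤ σ)
    (hlow : ∀ x : X, σ * ‖x‖ ≤ ‖fderiv ℝ (fun r' => F (r', k)) rt x‖)
    (α : ℝ) (hα : 0 < α)
    (δt : ℝ) (hδt : 0 ≤ δt) (f : Y) (hf : ‖f‖ ≤ δt)
    (r : X) (hrmem : r ∈ X')
    (B : X →L[ℝ] X)
    (hB₁ : B ∘L (α • (1 : X →L[ℝ] X) +
      ContinuousLinearMap.adjoint (fderiv ℝ (fun r' => F (r', k')) r) ∘L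
        fderiv ℝ (fun r' => F (r', k')) r) = 1)
    (hB₂ : (α • (1 : X →L[ℝ] X) +
      ContinuousLinearMap.adjoint (fderiv ℝ (fun r' => F (r', k')) r) ∘L
        fderiv ℝ (fun r' => F (r', k')) r) ∘L B = 1)
    (rplus : X)
    (hrplus : rplus = r - P ((B ∘L
      ContinuousLinearMap.adjoint (fderiv ℝ (fun r' => F (r', k')) r))
        (F (r, k') + f))) :
    ‖rt' - rplus‖ ≤ (k' - k) * (d₀ + d₂ / (2 * Real.sqrt α)) +
      δt / (2 * Real.sqrt α) +
      α / (α + σ ^ 2) * ‖rt - r‖ +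
      9 * d₁ * d₄ / (4 * α) * (k' - k) * ‖rt - r‖ +
      (9 * d₁ * d₃ / (4 * α) + d₃ / (4 * Real.sqrt α)) * ‖rt - r‖ ^ 2 := by
  have hΔk : (0:ℝ) ≤ k' - k := sub_nonneg.2 hkk'
  have hsqrt : 0 < Real.sqrt α := Real.sqrt_pos.2 hα
  -- differentiability plumbing
  have hFd : Differentiable ℝ F := hF.differentiable (by norm_num)
  set c₁ : X →L[ℝ] X × ℝ := (ContinuousLinearMap.id ℝ X).prod 0 with hc₁
  set Φ : X × ℝ → (X →L[ℝ] Y) :=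
    fun p => ((ContinuousLinearMap.compL ℝ X (X × ℝ) Y).flip c₁) (fderiv ℝ F p) with hΦdef
  have hpartder : ∀ (x : X) (κ : ℝ), HasFDerivAt (fun r' => F (r', κ)) (Φ (x, κ)) x := by
    intro x κ
    exact (hFd (x, κ)).hasFDerivAt.comp x ((hasFDerivAt_id x).prodMk (hasFDerivAt_const κ x))
  have hpart : ∀ (x : X) (κ : ℝ), fderiv ℝ (fun r' => F (r', κ)) x = Φ (x, κ) :=
    fun x κ => (hpartder x κ).fderiv
  have hΦdiff : Differentiable ℝ Φ :=
    ((ContinuousLinearMap.compL ℝ X (X × ℝ) Y).flip c₁).differentiable.comp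
      ((hF.fderiv_right (m := 1) (by norm_num)).differentiable (by norm_num))
  -- S1 : ‖F (rt, k')‖ ≤ d₂ * (k' - k)
  have hS1 : ‖F (rt, k')‖ ≤ d₂ * (k' - k) := by
    have hkdiff : ∀ z : ℝ, DifferentiableAt ℝ (fun κ : ℝ => F (rt, κ)) z :=
      fun z => (hFd.comp ((differentiable_const rt).prodMk differentiable_id)).differentiableAt
    have hmvt := Convex.norm_image_sub_le_of_norm_deriv_le (f := fun κ : ℝ => F (rt, κ))
      (fun z _ => hkdiff z) (fun z _ => hFk rt z) convex_univ
      (Set.mem_univ k) (Set.mem_univ k')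
    simp only [hrt, sub_zero, Real.norm_eq_abs, abs_of_nonneg hΔk] at hmvt
    exact hmvt
  -- Lipschitz bound in r for the partial derivative
  have hLipr : ∀ (κ : ℝ) (x y : X),
      ‖fderiv ℝ (fun r' => F (r', κ)) y - fderiv ℝ (fun r' => F (r', κ)) x‖ ≤ d₃ * ‖y - x‖ := by
    intro κ x y
    have hdiff : ∀ z : X, DifferentiableAt ℝ (fun r' => fderiv ℝ (fun r'' => F (r'', κ)) r') z := by
      have heq : (fun r' => fderiv ℝ (fun r'' => F (r'', κ)) r') = fun r' => Φ (r', κ) :=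
        funext fun r' => hpart r' κ
      rw [heq]
      exact fun z => (hΦdiff.comp (differentiable_id.prodMk (differentiable_const κ))).differentiableAt
    exact Convex.norm_image_sub_le_of_norm_fderiv_le (fun z _ => hdiff z)
      (fun z _ => hFrr z κ) convex_univ (Set.mem_univ x) (Set.mem_univ y)
  -- Lipschitz bound in κ for the partial derivative at rt
  have hS2b : ‖fderiv ℝ (fun r' => F (r', k')) rt - fderiv ℝ (fun r' => F (r', k)) rt‖
      ≤ d₄ * (k' - k) := by
    have hdiff : ∀ z : ℝ, DifferentiableAt ℝ (fun κ' : ℝ => fderiv ℝ (fun r' => F (r', κ')) rt) z := by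
      have heq : (fun κ' : ℝ => fderiv ℝ (fun r' => F (r', κ')) rt) = fun κ' => Φ (rt, κ') :=
        funext fun κ' => hpart rt κ'
      rw [heq]
      exact fun z =>
        (hΦdiff.comp ((differentiable_const rt).prodMk differentiable_id)).differentiableAt
    have hmvt := Convex.norm_image_sub_le_of_norm_deriv_le
      (f := fun κ' : ℝ => fderiv ℝ (fun r' => F (r', κ')) rt)
      (fun z _ => hdiff z) (fun z _ => hFkr rt z) convex_univ
      (Set.mem_univ k) (Set.mem_univ k')
    simp only [Real.norm_eq_abs, abs_of_nonneg hΔk] at hmvt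
    exact hmvt
  -- introduce opaque names
  set A := fderiv ℝ (fun r' => F (r', k')) r with hA
  set A₀ := fderiv ℝ (fun r' => F (r', k)) rt with hA₀def
  set e := rt - r with he
  clear_value A A₀ e
  have hne : (0:ℝ) ≤ ‖e‖ := norm_nonneg e
  have hAA₀ : ‖A - A₀‖ ≤ d₃ * ‖e‖ + d₄ * (k' - k) := by
    have h1 : ‖A - fderiv ℝ (fun r' => F (r', k')) rt‖ ≤ d₃ * ‖e‖ := by
      have h := hLipr k' rt r
      rw [← hA] at h
      have hre : ‖r - rt‖ = ‖e‖ := by rw [he, norm_sub_rev]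
      rw [hre] at h
      exact h
    calc ‖A - A₀‖
        = ‖(A - fderiv ℝ (fun r' => F (r', k')) rt) +
            (fderiv ℝ (fun r' => F (r', k')) rt - A₀)‖ := by abel_nf
      _ ≤ ‖A - fderiv ℝ (fun r' => F (r', k')) rt‖ +
            ‖fderiv ℝ (fun r' => F (r', k')) rt - A₀‖ := norm_add_le _ _
      _ ≤ d₃ * ‖e‖ + d₄ * (k' - k) := add_le_add h1 hS2b
  -- Taylor estimate
  have hTaylor : ‖F (rt, k') - A e - F (r, k')‖ ≤ d₃ * ‖e‖^2 / 2 := by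
    set ψ : ℝ → Y := fun t => F (r + t • e, k') - t • (A e) with hψdef
    have hψ' : ∀ t : ℝ,
        HasDerivAt ψ ((fderiv ℝ (fun r' => F (r', k')) (r + t • e)) e - A e) t := by
      intro t
      have hcurve : HasDerivAt (fun t : ℝ => r + t • e) e t := by
        simpa using ((hasDerivAt_id t).smul_const e).const_add r
      have h1 : HasDerivAt (fun t : ℝ => F (r + t • e, k')) ((Φ (r + t • e, k')) e) t :=
        by have := (hpartder (r + t • e) k').comp_hasDerivAt t hcurve; exact this
      rw [← hpart (r + t • e) k'] at h1
      have h2 : HasDerivAt (fun t : ℝ => t • (A e)) (A e) t := by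
        simpa using (hasDerivAt_id t).smul_const (A e)
      exact h1.sub h2
    have hbound : ∀ t ∈ Set.Icc (0:ℝ) 1,
        ‖(fderiv ℝ (fun r' => F (r', k')) (r + t • e)) e - A e‖ ≤ (d₃ * ‖e‖^2) * t := by
      intro t ht
      have h1 : (fderiv ℝ (fun r' => F (r', k')) (r + t • e)) e - A e
          = (fderiv ℝ (fun r' => F (r', k')) (r + t • e) - A) e := by
        rw [ContinuousLinearMap.sub_apply]
      rw [h1]
      have hlip : ‖fderiv ℝ (fun r' => F (r', k')) (r + t • e) - A‖
          ≤ d₃ * ‖r + t • e - r‖ := by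
        have h := hLipr k' r (r + t • e)
        rw [← hA] at h
        exact h
      calc ‖(fderiv ℝ (fun r' => F (r', k')) (r + t • e) - A) e‖
          ≤ ‖fderiv ℝ (fun r' => F (r', k')) (r + t • e) - A‖ * ‖e‖ :=
            ContinuousLinearMap.le_opNorm _ _
        _ ≤ (d₃ * ‖r + t • e - r‖) * ‖e‖ :=
            mul_le_mul_of_nonneg_right hlip (norm_nonneg e)
        _ = (d₃ * ‖e‖^2) * t := by
            rw [add_sub_cancel_left, norm_smul, Real.norm_eq_abs, abs_of_nonneg ht.1]; ring
    have htay := aux_taylor ψ _ (d₃ * ‖e‖^2) hψ' hbound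
    have hψ10 : ψ 1 - ψ 0 = F (rt, k') - A e - F (r, k') := by
      have h1 : r + (1:ℝ) • e = rt := by rw [one_smul, he]; abel
      have h0 : r + (0:ℝ) • e = r := by rw [zero_smul, add_zero]
      calc ψ 1 - ψ 0
          = (F (r + (1:ℝ) • e, k') - (1:ℝ) • (A e)) -
            (F (r + (0:ℝ) • e, k') - (0:ℝ) • (A e)) := rfl
        _ = F (rt, k') - A e - F (r, k') := by rw [h1, h0, one_smul, zero_smul]; abel
    rw [hψ10] at htay
    linarith
  clear hΦdiff hpart hpartder hΦdef hc₁ hLipr hS2b hFd hF hFrr hFkr hFk hX' hrt hrt' 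
  set Q := F (rt, k') - A e - F (r, k') with hQdef
  set z := F (rt, k') + f - Q with hzdef
  clear_value Q z
  have hwz : F (r, k') + f = z - A e := by rw [hzdef, hQdef]; abel
  -- operator identities
  have hBe : α • B e + B (ContinuousLinearMap.adjoint A (A e)) = e := by
    have h := congrArg (fun L : X →L[ℝ] X => L e) hB₁
    simpa [ContinuousLinearMap.comp_apply, map_add, map_smul] using h
  have hemem : e ∈ X' := by rw [he]; exact Submodule.sub_mem X' hrtmem hrmem
  have hPe : P e = e := aux_P_fix X' P hP e hemem
  have hstep : e - P (B (ContinuousLinearMap.adjoint A (A e))) = P (α • B e) := by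
    calc e - P (B (ContinuousLinearMap.adjoint A (A e)))
        = P e - P (B (ContinuousLinearMap.adjoint A (A e))) := by rw [hPe]
      _ = P (e - B (ContinuousLinearMap.adjoint A (A e))) := (map_sub P _ _).symm
      _ = P (α • B e) := by
          congr 1
          exact (eq_sub_of_add_eq hBe).symm
  have hdecomp : rt' - rplus =
      (rt' - rt) + P (α • B e) + P (B (ContinuousLinearMap.adjoint A z)) := by
    rw [hrplus, hwz]
    have h1 : (B ∘L ContinuousLinearMap.adjoint A) (z - A e) =
        B (ContinuousLinearMap.adjoint A z) - B (ContinuousLinearMap.adjoint A (A e)) := by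
      simp only [ContinuousLinearMap.comp_apply, map_sub]
    rw [h1]
    rw [map_sub P]
    rw [← hstep]
    rw [he]
    abel
  -- norm bounds
  have hnorm1 : ‖P (α • B e)‖ ≤ α * ‖B e‖ := by
    refine le_trans (aux_P_norm X' P hP _) ?_
    rw [norm_smul, Real.norm_eq_abs, abs_of_nonneg hα.le]
  have hz_norm : ‖z‖ ≤ d₂ * (k' - k) + δt + d₃ * ‖e‖^2 / 2 := by
    rw [hzdef]
    calc ‖F (rt, k') + f - Q‖ ≤ ‖F (rt, k') + f‖ + ‖Q‖ := norm_sub_le _ _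
      _ ≤ ‖F (rt, k')‖ + ‖f‖ + ‖Q‖ := add_le_add (norm_add_le _ _) le_rfl
      _ ≤ d₂ * (k' - k) + δt + d₃ * ‖e‖^2 / 2 :=
          add_le_add (add_le_add hS1 hf) hTaylor
  have hnorm2 : ‖P (B (ContinuousLinearMap.adjoint A z))‖ ≤
      (d₂ * (k' - k) + δt + d₃ * ‖e‖^2 / 2) / (2 * Real.sqrt α) := by
    refine le_trans (aux_P_norm X' P hP _) (le_trans (aux_R_bound A B α hα hB₂ z) ?_)
    gcongr
  -- bound on α * ‖B e‖
  set ε := d₃ * ‖e‖ + d₄ * (k' - k) with hεdef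
  have hε : 0 ≤ ε := add_nonneg (mul_nonneg hd₃.le hne) (mul_nonneg hd₄.le hΔk)
  set s := max (σ - ε) 0 with hsdef
  have hs0 : 0 ≤ s := le_max_right _ _
  have hAxlow : ∀ x : X, s * ‖x‖ ≤ ‖A x‖ := by
    intro x
    have h1 : ‖A₀ x - A x‖ ≤ ε * ‖x‖ := by
      calc ‖A₀ x - A x‖ = ‖(A₀ - A) x‖ := by rw [ContinuousLinearMap.sub_apply]
        _ ≤ ‖A₀ - A‖ * ‖x‖ := ContinuousLinearMap.le_opNorm _ _
        _ ≤ ε * ‖x‖ := mul_le_mul_of_nonneg_right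
            (by rw [norm_sub_rev]; exact hAA₀) (norm_nonneg x)
    have h2 : σ * ‖x‖ ≤ ‖A₀ x‖ := hlow x
    have h3 : ‖A₀ x‖ ≤ ‖A x‖ + ‖A₀ x - A x‖ := by
      have h := norm_add_le (A x) (A₀ x - A x)
      simpa using h
    rcases le_total σ ε with hcase | hcase
    · have hz0 : s = 0 := max_eq_right (by linarith)
      rw [hz0, zero_mul]; exact norm_nonneg _
    · have hmax : s = σ - ε := max_eq_left (by linarith)
      rw [hmax, sub_mul]
      linarith
  have hBebound := aux_B_bound A B α hα hB₂ s hs0 hAxlow e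
  have hαBe : α * ‖B e‖ ≤ α / (α + σ^2) * ‖e‖ + 2 * d₁ * ε / α * ‖e‖ := by
    have hfr := aux_frac α σ ε hα hσ hε
    rw [← hsdef] at hfr
    have h1 : α * ‖B e‖ ≤ α / (α + s^2) * ‖e‖ := by
      rw [div_mul_eq_mul_div, le_div_iff₀ (by positivity)]
      nlinarith [mul_le_mul_of_nonneg_left hBebound hα.le]
    have h2 : α / (α + s^2) * ‖e‖ ≤ (α / (α + σ^2) + 2*σ*ε/α) * ‖e‖ :=
      mul_le_mul_of_nonneg_right hfr hne
    have hσd₁ : σ * ‖e‖ ≤ d₁ * ‖e‖ :=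
      le_trans (hlow e) (le_trans (ContinuousLinearMap.le_opNorm A₀ e)
        (mul_le_mul_of_nonneg_right (hA₀def ▸ hFr rt k) hne))
    have h3 : 2*σ*ε/α * ‖e‖ ≤ 2*d₁*ε/α * ‖e‖ := by
      rw [div_mul_eq_mul_div, div_mul_eq_mul_div, div_le_div_iff₀ hα hα]
      nlinarith [mul_le_mul_of_nonneg_right hσd₁ hε, hα.le]
    calc α * ‖B e‖ ≤ (α / (α + σ^2) + 2*σ*ε/α) * ‖e‖ := h1.trans h2
      _ = α / (α + σ^2) * ‖e‖ + 2*σ*ε/α * ‖e‖ := by ring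
      _ ≤ α / (α + σ^2) * ‖e‖ + 2*d₁*ε/α * ‖e‖ := by linarith
  -- final combination
  have hmain : ‖rt' - rplus‖ ≤ d₀ * (k' - k) +
      (α / (α + σ^2) * ‖e‖ + 2 * d₁ * ε / α * ‖e‖) +
      (d₂ * (k' - k) + δt + d₃ * ‖e‖^2 / 2) / (2 * Real.sqrt α) := by
    rw [hdecomp]
    calc ‖(rt' - rt) + P (α • B e) + P (B (ContinuousLinearMap.adjoint A z))‖
        ≤ ‖rt' - rt‖ + ‖P (α • B e)‖ + ‖P (B (ContinuousLinearMap.adjoint A z))‖ :=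
          norm_add₃_le
      _ ≤ d₀ * (k' - k) + (α / (α + σ^2) * ‖e‖ + 2 * d₁ * ε / α * ‖e‖) +
          (d₂ * (k' - k) + δt + d₃ * ‖e‖^2 / 2) / (2 * Real.sqrt α) :=
          add_le_add (add_le_add hclose (hnorm1.trans hαBe)) hnorm2
  have earith1 : (d₂ * (k' - k) + δt + d₃ * ‖e‖^2 / 2) / (2 * Real.sqrt α) =
      (k' - k) * (d₂ / (2 * Real.sqrt α)) + δt / (2 * Real.sqrt α) +
      d₃ / (4 * Real.sqrt α) * ‖e‖^2 := by
    field_simp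
    ring
  have earith2 : 2 * d₁ * ε / α * ‖e‖ ≤
      9 * d₁ * d₄ / (4 * α) * (k' - k) * ‖e‖ + 9 * d₁ * d₃ / (4 * α) * ‖e‖^2 := by
    rw [hεdef]
    have key : 9 * d₁ * d₄ / (4 * α) * (k' - k) * ‖e‖ + 9 * d₁ * d₃ / (4 * α) * ‖e‖^2 -
        2 * d₁ * (d₃ * ‖e‖ + d₄ * (k' - k)) / α * ‖e‖ =
        (d₁ * d₄ * (k' - k) * ‖e‖ + d₁ * d₃ * ‖e‖^2) / (4 * α) := by
      field_simp
      ring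
    have hpos : 0 ≤ (d₁ * d₄ * (k' - k) * ‖e‖ + d₁ * d₃ * ‖e‖^2) / (4 * α) :=
      div_nonneg (add_nonneg
        (mul_nonneg (mul_nonneg (mul_nonneg hd₁.le hd₄.le) hΔk) hne)
        (mul_nonneg (mul_nonneg hd₁.le hd₃.le) (sq_nonneg _))) (by positivity)
    linarith [key, hpos]
  rw [earith1] at hmain
  linarith [hmain, earith2]
end

section
/- Contraction of the exact projected Newton step at a fixed frequency: let X and Y be real Hilbert spaces and F : X → Y twice continuously Fréchet differentiable with ‖F'(x)‖ ≤ d₁ and ‖F''(x)‖ ≤ d₃ for all x ∈ X. Let X' ⊆ X be a closed subspace with orthogonal projection P, let r̃ ∈ X' satisfy F(r̃) = 0, and let σ > 0 satisfy ‖F'(r̃)x‖ ≥ σ‖x‖ for all x ∈ X. Let d₀ > 0, let ε be a real number with 0 < ε < 3, let α > 0 satisfy α ≤ εσ²/(3 − ε), and set c₀ := 4ε/(3 d₃ (9 d₁ + √α)). If r ∈ X' satisfies ‖r̃ − r‖ ≤ d₀c₀α and r⁺ := r − P R_α(F'(r)) F(r), then ‖r̃ − r⁺‖ ≤ (ε(1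 + d₀)/3) ‖r̃ − r‖. -/
set_option maxHeartbeats 1000000

open ContinuousLinearMap in
theorem my_taylor {X Y : Type*}
    [NormedAddCommGroup X] [NormedSpace ℝ X]
    [NormedAddCommGroup Y] [NormedSpace ℝ Y]
    (F : X → Y) (hF : ContDiff ℝ 2 F) (d₃ : ℝ)
    (hF'' : ∀ x : X, ‖fderiv ℝ (fderiv ℝ F) x‖ ≤ d₃)
    (a b : X) :
    ‖F b - F a - fderiv ℝ F a (b - a)‖ ≤ d₃ / 2 * ‖b - a‖ ^ 2 := by
  have hF1 : ContDiff ℝ 1 (fderiv ℝ F) := hF.fderiv_right (le_refl _)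
  have hdF : Differentiable ℝ F := hF.differentiable (by norm_num)
  have hlip : ∀ x y : X, ‖fderiv ℝ F y - fderiv ℝ F x‖ ≤ d₃ * ‖y - x‖ := by
    intro x y
    exact (convex_univ).norm_image_sub_le_of_norm_fderiv_le
      (fun z _ => (hF1.differentiable one_ne_zero).differentiableAt)
      (fun z _ => hF'' z) trivial trivial
  set v := b - a with hv
  set g : ℝ → Y := fun t => F (a + t • v) - F a - t • (fderiv ℝ F a v) with hg
  have hgd : ∀ t : ℝ, HasDerivAt g (fderiv ℝ F (a + t • v) v - fderiv ℝ F a v) t := by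
    intro t
    have h1 : HasDerivAt (fun t : ℝ => a + t • v) v t := by
      simpa using ((hasDerivAt_id t).smul_const v).const_add a
    have h2 : HasDerivAt (fun t : ℝ => F (a + t • v)) (fderiv ℝ F (a + t • v) v) t := by
      exact ((hdF (a + t • v)).hasFDerivAt.comp_hasDerivAt t h1)
    exact (h2.sub_const (F a)).sub (by simpa using (hasDerivAt_id t).smul_const (fderiv ℝ F a v))
  have key : ∀ x ∈ Set.Icc (0:ℝ) 1, ‖g x‖ ≤ d₃ * ‖v‖ ^ 2 / 2 * x ^ 2 := by
    intro x hx
    refine image_norm_le_of_norm_deriv_right_le_deriv_boundary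
      (f := g) (f' := fun t => fderiv ℝ F (a + t • v) v - fderiv ℝ F a v)
      (a := 0) (b := 1)
      (fun t _ => (hgd t).continuousAt.continuousWithinAt)
      (fun t _ => (hgd t).hasDerivWithinAt)
      (B := fun t => d₃ * ‖v‖ ^ 2 / 2 * t ^ 2) (B' := fun t => d₃ * ‖v‖ ^ 2 * t)
      (by simp [hg])
      (fun t => by
        have := ((hasDerivAt_pow 2 t).const_mul (d₃ * ‖v‖ ^ 2 / 2))
        exact this.congr_deriv (by ring))
      ?_ hx
    intro t ht
    calc ‖fderiv ℝ F (a + t • v) v - fderiv ℝ F a v‖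
        ≤ ‖fderiv ℝ F (a + t • v) - fderiv ℝ F a‖ * ‖v‖ := by
          simpa using (fderiv ℝ F (a + t • v) - fderiv ℝ F a).le_opNorm v
      _ ≤ d₃ * ‖a + t • v - a‖ * ‖v‖ := by
          gcongr; exact hlip a (a + t • v)
      _ ≤ d₃ * ‖v‖ ^ 2 * t := by
          have : ‖a + t • v - a‖ = t * ‖v‖ := by
            simp [norm_smul, abs_of_nonneg ht.1]
          rw [this]; ring_nf; nlinarith [norm_nonneg v, ht.1]
  have h1 := key 1 (by norm_num)
  have hg1 : g 1 = F b - F a - fderiv ℝ F a (b - a) := by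
    simp [hg, hv]
  rw [hg1] at h1
  calc ‖F b - F a - fderiv ℝ F a (b - a)‖ ≤ d₃ * ‖v‖ ^ 2 / 2 * 1 ^ 2 := h1
    _ = d₃ / 2 * ‖b - a‖ ^ 2 := by rw [hv]; ring

theorem my_scalar (d₀ d₁ d₃ σ ε α δ : ℝ)
    (hd₀ : 0 < d₀) (hd₁ : 0 < d₁) (hd₃ : 0 < d₃)
    (hσ : 0 < σ) (hσd₁ : σ ≤ d₁)
    (hε0 : 0 < ε) (hε3 : ε < 3)
    (hα : 0 < α) (hα3 : α * (3 - ε) ≤ ε * σ ^ 2)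
    (hδ : 0 < δ)
    (hclose : δ ≤ d₀ * (4 * ε / (3 * d₃ * (9 * d₁ + Real.sqrt α))) * α) :
    α * (δ / (α + (max 0 (σ - d₃ * δ)) ^ 2)) + (d₃ / 2 * δ ^ 2) / (2 * Real.sqrt α)
      ≤ ε * (1 + d₀) / 3 * δ := by
  have hspos0 : 0 < Real.sqrt α := Real.sqrt_pos.mpr hα
  have hs20 : Real.sqrt α ^ 2 = α := Real.sq_sqrt hα.le
  generalize hs : Real.sqrt α = s at hclose hspos0 hs20 ⊢
  have hspos : 0 < s := hspos0
  have hs2 : s ^ 2 = α := hs20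
  set t := d₃ * δ with ht
  have htpos : 0 < t := mul_pos hd₃ hδ
  set m := max 0 (σ - t) with hm
  have hm0 : 0 ≤ m := le_max_left _ _
  have hmσ : m ≤ σ := max_le hσ.le (by linarith [htpos])
  have hσm : σ - m ≤ t := by
    rcases le_total (σ - t) 0 with h | h
    · rw [hm, max_eq_left h]; linarith
    · rw [hm, max_eq_right h]; linarith
  have hK : 0 < 9 * d₁ + s := by positivity
  have htle : 3 * t * (9 * d₁ + s) ≤ 4 * ε * d₀ * α := by
    have h1 : d₃ * (d₀ * (4 * ε / (3 * d₃ * (9 * d₁ + s))) * α) =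
        4 * ε * d₀ * α / (3 * (9 * d₁ + s)) := by
      field_simp
    have h2 : t ≤ 4 * ε * d₀ * α / (3 * (9 * d₁ + s)) := by
      rw [← h1, ht]; exact mul_le_mul_of_nonneg_left hclose hd₃.le
    rw [le_div_iff₀ (by positivity)] at h2
    linarith
  have hden : 0 < α + m ^ 2 := by positivity
  have hm2 : 0 ≤ σ ^ 2 - m ^ 2 := by nlinarith
  have hσ2m2 : σ ^ 2 - m ^ 2 ≤ 2 * d₁ * t := by
    nlinarith [mul_le_mul_of_nonneg_right hσm (by linarith : (0:ℝ) ≤ σ + m)]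
  -- claim 1 : α / (α + m²) ≤ ε/3 + 2 d₁ t / α
  have claim1 : α / (α + m ^ 2) ≤ ε / 3 + 2 * d₁ * t / α := by
    rw [div_add_div _ _ (by norm_num) hα.ne', div_le_div_iff₀ hden (by positivity)]
    have F1 : 3 * α ^ 2 - ε * α ^ 2 ≤ ε * σ ^ 2 * α := by nlinarith [mul_le_mul_of_nonneg_right hα3 hα.le]
    have F2 : 3 * α * (σ ^ 2 - m ^ 2) ≤ 6 * d₁ * t * α := by nlinarith [mul_le_mul_of_nonneg_left hσ2m2 (by positivity : (0:ℝ) ≤ 3 * α)]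
    have F3 : 0 ≤ (3 - ε) * α * (σ ^ 2 - m ^ 2) :=
      mul_nonneg (mul_nonneg (by linarith) hα.le) hm2
    have F4 : 0 ≤ 6 * d₁ * t * m ^ 2 := by positivity
    have F5 : 0 ≤ ε * α * m ^ 2 := by positivity
    nlinarith [F1, F2, F3, F4, F5]
  have claim2 : 2 * d₁ * t / α + t / (4 * s) ≤ ε * d₀ / 3 := by
    rw [div_add_div _ _ hα.ne' (by positivity), div_le_div_iff₀ (by positivity) (by norm_num)]
    have h8 : 3 * t * (8 * d₁ + s) ≤ 4 * ε * d₀ * α := by nlinarith [mul_nonneg htpos.le hd₁.le]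
    have h8s := mul_le_mul_of_nonneg_right h8 hspos.le
    have e : 3 * t * α = 3 * t * s ^ 2 * 1 := by rw [hs2]; ring
    nlinarith [h8s, e]
  have hfirst : α * (δ / (α + m ^ 2)) ≤ (ε / 3 + 2 * d₁ * t / α) * δ := by
    have : α * (δ / (α + m ^ 2)) = α / (α + m ^ 2) * δ := by ring
    rw [this]
    exact mul_le_mul_of_nonneg_right claim1 hδ.le
  have hsecond : (d₃ / 2 * δ ^ 2) / (2 * s) = t / (4 * s) * δ := by
    field_simp [ht]; ring
  rw [hsecond]
  have h := mul_le_mul_of_nonneg_right claim2 hδ.le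
  have hrhs : ε * (1 + d₀) / 3 * δ = ε / 3 * δ + ε * d₀ / 3 * δ := by ring
  rw [hrhs]
  nlinarith [hfirst, h]

section helpers
variable {X Y : Type*}
    [NormedAddCommGroup X] [InnerProductSpace ℝ X] [CompleteSpace X]
    [NormedAddCommGroup Y] [InnerProductSpace ℝ Y] [CompleteSpace Y]

open ContinuousLinearMap

theorem my_Tinner (A : X →L[ℝ] Y) (α : ℝ) (u : X) :
    (inner ℝ (((α • (1 : X →L[ℝ] X) + adjoint A ∘L A)) u) u : ℝ)
      = α * ‖u‖ ^ 2 + ‖A u‖ ^ 2 := by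
  simp only [ContinuousLinearMap.add_apply, ContinuousLinearMap.smul_apply,
    ContinuousLinearMap.one_apply, ContinuousLinearMap.comp_apply,
    inner_add_left, real_inner_smul_left, adjoint_inner_left]
  rw [real_inner_self_eq_norm_sq, real_inner_self_eq_norm_sq]

theorem my_B_bound (A : X →L[ℝ] Y) (α : ℝ) (hα : 0 < α) (c : ℝ) (hc : 0 ≤ c)
    (hAlow : ∀ u : X, c * ‖u‖ ≤ ‖A u‖)
    (B : X →L[ℝ] X)
    (hB₂ : (α • (1 : X →L[ℝ] X) + adjoint A ∘L A) ∘L B = 1)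
    (x : X) : (α + c ^ 2) * ‖B x‖ ≤ ‖x‖ := by
  have hTB : (α • (1 : X →L[ℝ] X) + adjoint A ∘L A) (B x) = x := by
    have := DFunLike.congr_fun hB₂ x
    simpa using this
  have h1 : α * ‖B x‖ ^ 2 + ‖A (B x)‖ ^ 2 = inner ℝ x (B x) := by
    rw [← my_Tinner A α (B x), hTB]
  have h2 : (inner ℝ x (B x) : ℝ) ≤ ‖x‖ * ‖B x‖ := real_inner_le_norm x (B x)
  have h3 : c ^ 2 * ‖B x‖ ^ 2 ≤ ‖A (B x)‖ ^ 2 := by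
    have h := hAlow (B x)
    have h' := mul_le_mul h h (by positivity) (norm_nonneg _)
    nlinarith [h']
  rcases eq_or_lt_of_le (norm_nonneg (B x)) with h | h
  · rw [← h]; simp [norm_nonneg x]
  · have : (α + c ^ 2) * ‖B x‖ * ‖B x‖ ≤ ‖x‖ * ‖B x‖ := by nlinarith
    exact le_of_mul_le_mul_right this h

theorem my_BA_bound (A : X →L[ℝ] Y) (α : ℝ) (hα : 0 < α)
    (B : X →L[ℝ] X)
    (hB₂ : (α • (1 : X →L[ℝ] X) + adjoint A ∘L A) ∘L B = 1)
    (y : Y) : ‖B (adjoint A y)‖ ≤ ‖y‖ / (2 * Real.sqrt α) := by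
  set u := B (adjoint A y) with hu
  have hTB : (α • (1 : X →L[ℝ] X) + adjoint A ∘L A) u = adjoint A y := by
    have := DFunLike.congr_fun hB₂ (adjoint A y)
    simpa using this
  have h1 : α * ‖u‖ ^ 2 + ‖A u‖ ^ 2 = inner ℝ (adjoint A y) u := by
    rw [← my_Tinner A α u, hTB]
  have h2 : (inner ℝ (adjoint A y) u : ℝ) = inner ℝ y (A u) := adjoint_inner_left A u y
  have h3 : (inner ℝ y (A u) : ℝ) ≤ ‖y‖ * ‖A u‖ := real_inner_le_norm _ _
  have h4 : α * ‖u‖ ^ 2 ≤ ‖y‖ ^ 2 / 4 := by nlinarith [sq_nonneg (‖y‖ - 2 * ‖A u‖)]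
  have hspos : 0 < Real.sqrt α := Real.sqrt_pos.mpr hα
  have hs2 : Real.sqrt α ^ 2 = α := Real.sq_sqrt hα.le
  rw [le_div_iff₀ (by positivity)]
  have h5 : (‖u‖ * (2 * Real.sqrt α)) ^ 2 ≤ ‖y‖ ^ 2 := by
    have : (‖u‖ * (2 * Real.sqrt α)) ^ 2 = 4 * α * ‖u‖ ^ 2 := by
      rw [mul_pow, mul_pow, hs2]; ring
    rw [this]; linarith
  nlinarith [norm_nonneg u, norm_nonneg y, mul_nonneg (norm_nonneg u) (by positivity : (0:ℝ) ≤ 2 * Real.sqrt α)]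

end helpers

open ContinuousLinearMap in
/-- Contraction of the exact projected Newton step at a fixed frequency. -/
theorem stmt_14 {X Y : Type*}
    [NormedAddCommGroup X] [InnerProductSpace ℝ X] [CompleteSpace X]
    [NormedAddCommGroup Y] [InnerProductSpace ℝ Y] [CompleteSpace Y]
    (F : X → Y) (hF : ContDiff ℝ 2 F)
    (d₁ d₃ : ℝ) (hd₁ : 0 < d₁) (hd₃ : 0 < d₃)
    (hF' : ∀ x : X, ‖fderiv ℝ F x‖ ≤ d₁)
    (hF'' : ∀ x : X, ‖fderiv ℝ (fderiv ℝ F) x‖ ≤ d₃)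
    (X' : Submodule ℝ X) (hX' : IsClosed (X' : Set X))
    (P : X →L[ℝ] X) (hP : ∀ x : X, P x ∈ X' ∧ x - P x ∈ X'ᗮ)
    (rt : X) (hrtmem : rt ∈ X') (hrt : F rt = 0)
    (σ : ℝ) (hσ : 0 < σ) (hlow : ∀ x : X, σ * ‖x‖ ≤ ‖fderiv ℝ F rt x‖)
    (d₀ : ℝ) (hd₀ : 0 < d₀)
    (ε : ℝ) (hε0 : 0 < ε) (hε3 : ε < 3)
    (α : ℝ) (hα : 0 < α) (hαle : α ≤ ε * σ ^ 2 / (3 - ε))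
    (c₀ : ℝ) (hc₀ : c₀ = 4 * ε / (3 * d₃ * (9 * d₁ + Real.sqrt α)))
    (r : X) (hrmem : r ∈ X') (hrclose : ‖rt - r‖ ≤ d₀ * c₀ * α)
    (B : X →L[ℝ] X)
    (hB₁ : B ∘L (α • (1 : X →L[ℝ] X) +
      ContinuousLinearMap.adjoint (fderiv ℝ F r) ∘L fderiv ℝ F r) = 1)
    (hB₂ : (α • (1 : X →L[ℝ] X) +
      ContinuousLinearMap.adjoint (fderiv ℝ F r) ∘L fderiv ℝ F r) ∘L B = 1)
    (rplus : X)
    (hrplus : rplus =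
      r - P ((B ∘L ContinuousLinearMap.adjoint (fderiv ℝ F r)) (F r))) :
    ‖rt - rplus‖ ≤ ε * (1 + d₀) / 3 * ‖rt - r‖ := by
  by_cases hv0 : rt = r
  · subst hv0
    rw [hrplus, hrt]
    simp
  set A := fderiv ℝ F r with hA
  set v := rt - r with hv
  have hδpos : 0 < ‖v‖ := norm_pos_iff.mpr (sub_ne_zero.mpr hv0)
  -- projection facts
  have hPfix : ∀ x, x ∈ X' → P x = x := by
    intro x hx
    have h1 := (hP x).1
    have h2 := (hP x).2
    have hmem : x - P x ∈ X' := X'.sub_mem hx h1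
    have hz : (inner ℝ (x - P x) (x - P x) : ℝ) = 0 :=
      (Submodule.mem_orthogonal X' _).mp h2 (x - P x) hmem
    have : x - P x = 0 := by
      rwa [inner_self_eq_zero] at hz
    have := sub_eq_zero.mp this
    exact this.symm
  have hPnorm : ∀ x : X, ‖P x‖ ≤ ‖x‖ := by
    intro x
    have horth : (inner ℝ (P x) (x - P x) : ℝ) = 0 :=
      (Submodule.mem_orthogonal X' _).mp (hP x).2 (P x) (hP x).1
    have hpyth := norm_add_sq_real (P x) (x - P x)
    rw [horth] at hpyth
    have hxeq : P x + (x - P x) = x := by abel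
    rw [hxeq] at hpyth
    nlinarith [norm_nonneg (P x), norm_nonneg x, sq_nonneg ‖x - P x‖]
  -- σ ≤ d₁
  have hσd₁ : σ ≤ d₁ := by
    have h1 := hlow v
    have h2 : ‖fderiv ℝ F rt v‖ ≤ d₁ * ‖v‖ :=
      le_trans ((fderiv ℝ F rt).le_opNorm v) (by gcongr; exact hF' rt)
    have := le_trans h1 h2
    exact le_of_mul_le_mul_right (by linarith) hδpos
  -- lower bound on A
  have hF1 : ContDiff ℝ 1 (fderiv ℝ F) := hF.fderiv_right (le_refl _)
  have hlipA : ‖A - fderiv ℝ F rt‖ ≤ d₃ * ‖v‖ := by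
    have := (convex_univ).norm_image_sub_le_of_norm_fderiv_le
      (f := fderiv ℝ F)
      (fun z _ => (hF1.differentiable one_ne_zero).differentiableAt)
      (fun z _ => hF'' z) (Set.mem_univ rt) (Set.mem_univ r)
    simpa [hA, hv, norm_sub_rev r rt] using this
  set m := max 0 (σ - d₃ * ‖v‖) with hm
  have hAlow : ∀ u : X, m * ‖u‖ ≤ ‖A u‖ := by
    intro u
    have h1 := hlow u
    have h2 : ‖fderiv ℝ F rt u - A u‖ ≤ d₃ * ‖v‖ * ‖u‖ := by
      have := (fderiv ℝ F rt - A).le_opNorm u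
      simp only [ContinuousLinearMap.sub_apply] at this
      calc ‖fderiv ℝ F rt u - A u‖ ≤ ‖fderiv ℝ F rt - A‖ * ‖u‖ := this
        _ ≤ d₃ * ‖v‖ * ‖u‖ := by
            gcongr
            rw [norm_sub_rev]
            exact hlipA
    have h3 : (σ - d₃ * ‖v‖) * ‖u‖ ≤ ‖A u‖ := by
      have := norm_sub_norm_le (fderiv ℝ F rt u) (A u)
      nlinarith
    rcases le_total (σ - d₃ * ‖v‖) 0 with h | h
    · rw [hm, max_eq_left h]; simp [norm_nonneg]
    · rw [hm, max_eq_right h]; exact h3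
  have hm0 : 0 ≤ m := le_max_left _ _
  -- the quadratic remainder
  have hQ : ‖-F r - A v‖ ≤ d₃ / 2 * ‖v‖ ^ 2 := by
    have h := my_taylor F hF d₃ hF'' r rt
    rw [hrt] at h
    simpa [hv, hA] using h
  set Q := -F r - A v with hQd
  -- split of B (A* (A v))
  have hBsplit : B (adjoint A (A v)) = v - α • B v := by
    have h := DFunLike.congr_fun hB₁ v
    simp only [ContinuousLinearMap.comp_apply, ContinuousLinearMap.add_apply,
      ContinuousLinearMap.smul_apply, ContinuousLinearMap.one_apply, map_add, map_smul] at h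
    -- h : α • B v + B (adjoint A (A v)) = v
    rw [eq_sub_iff_add_eq]
    rw [add_comm]
    exact h
  -- key identity
  have hFr : F r = -(A v) - Q := by rw [hQd]; abel
  have hPv : P v = v := hPfix v (X'.sub_mem hrtmem hrmem)
  have hkey : rt - rplus = α • P (B v) - P (B (adjoint A Q)) := by
    have e2 : (B ∘L adjoint A) (F r) = -(v - α • B v) - B (adjoint A Q) := by
      rw [ContinuousLinearMap.comp_apply, hFr, map_sub, map_neg, map_sub, map_neg, hBsplit]
    calc rt - rplus = (rt - r) + P ((B ∘L adjoint A) (F r)) := by rw [hrplus]; abel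
      _ = v + (-(P v - α • P (B v)) - P (B (adjoint A Q))) := by
          rw [e2, map_sub, map_neg, map_sub, map_smul, hv]
      _ = α • P (B v) - P (B (adjoint A Q)) := by rw [hPv]; abel
  rw [hkey]
  -- norm estimates
  have hBv : ‖B v‖ ≤ ‖v‖ / (α + m ^ 2) := by
    have h := my_B_bound A α hα m hm0 hAlow B hB₂ v
    rw [le_div_iff₀ (by positivity)]
    linarith [h]
  have hW : ‖B (adjoint A Q)‖ ≤ (d₃ / 2 * ‖v‖ ^ 2) / (2 * Real.sqrt α) := by
    have h := my_BA_bound A α hα B hB₂ Q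
    have hsq : (0:ℝ) < 2 * Real.sqrt α := by positivity
    have : ‖Q‖ / (2 * Real.sqrt α) ≤ (d₃ / 2 * ‖v‖ ^ 2) / (2 * Real.sqrt α) :=
      div_le_div_of_nonneg_right hQ hsq.le
    linarith
  have hnorm : ‖α • P (B v) - P (B (adjoint A Q))‖
      ≤ α * (‖v‖ / (α + m ^ 2)) + (d₃ / 2 * ‖v‖ ^ 2) / (2 * Real.sqrt α) := by
    calc ‖α • P (B v) - P (B (adjoint A Q))‖
        ≤ ‖α • P (B v)‖ + ‖P (B (adjoint A Q))‖ := norm_sub_le _ _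
      _ ≤ α * ‖B v‖ + ‖B (adjoint A Q)‖ := by
          rw [norm_smul, Real.norm_eq_abs, abs_of_pos hα]
          gcongr <;> first | exact hPnorm _ | positivity
      _ ≤ α * (‖v‖ / (α + m ^ 2)) + (d₃ / 2 * ‖v‖ ^ 2) / (2 * Real.sqrt α) := by
          gcongr <;> first | exact hBv | exact hW | positivity
  refine le_trans hnorm ?_
  have hα3 : α * (3 - ε) ≤ ε * σ ^ 2 := by
    rw [le_div_iff₀ (by linarith)] at hαle
    linarith
  have hclose' : ‖v‖ ≤ d₀ * (4 * ε / (3 * d₃ * (9 * d₁ + Real.sqrt α))) * α := by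
    rw [← hc₀]
    exact hrclose
  exact my_scalar d₀ d₁ d₃ σ ε α ‖v‖ hd₀ hd₁ hd₃ hσ hσd₁ hε0 hε3 hα hα3 hδpos hclose'
end
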